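/- arXiv:1706.09784 — 9 statements merged into one kernel-verified Lean document; each statement's English description precedes it below -/
import Mathlib

section
/- If p : D → C is holomorphic on the unit disc with p(0) = 1 and Re p(z) > 0 for all z ∈ D, and p(z) = 1 + Σ_{n≥1} c_n zⁿ is its power series expansion, then |c_n| ≤ 2 for all n ≥ 1. -/
open Complex MeasureTheory Real Filter
set_option maxHeartbeats 1000000

private lemma carath_int_exp (m : ℤ) :
    (∫ θ in (0:ℝ)..(2*Real.pi), Complex.exp ((m:ℂ) * θ * I))
      = if m = 0 then (2*Real.pi : ℂ) else 0 := by
  rcases eq_or_ne m 0 with h | h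
  · simp [h]
  · have hc : (m:ℂ) * I ≠ 0 := by simp [Complex.ext_iff, h]
    have : ∀ θ : ℝ, (m:ℂ) * θ * I = ((m:ℂ)*I) * θ := fun θ => by ring
    simp only [this]
    rw [integral_exp_mul_complex hc, if_neg h]
    have h1 : ((m:ℂ)*I) * (2*Real.pi : ℝ) = (m:ℂ) * (2*Real.pi*I) := by push_cast; ring
    rw [h1, Complex.exp_int_mul_two_pi_mul_I]
    simp

private lemma carath_mem {r : ℝ} (hr0 : 0 < r) (hr1 : r < 1) (θ : ℝ) :
    (r:ℂ) * Complex.exp (θ * I) ∈ Metric.ball (0:ℂ) 1 := by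
  rw [mem_ball_zero_iff, norm_mul,
    Complex.norm_exp_ofReal_mul_I, Complex.norm_real, Real.norm_eq_abs, abs_of_pos hr0, mul_one]
  exact hr1

private lemma carath_summable (c : ℕ → ℂ) (p : ℂ → ℂ)
    (hsum : ∀ z ∈ Metric.ball (0 : ℂ) 1, HasSum (fun n : ℕ => c n * z ^ n) (p z))
    {r : ℝ} (hr0 : 0 < r) (hr1 : r < 1) :
    Summable fun k => ‖c k‖ * r ^ k := by
  set ρ : ℝ := (1 + r) / 2 with hρ
  have hρ0 : 0 < ρ := by positivity
  have hρ1 : ρ < 1 := by rw [hρ]; linarith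
  have hrρ : r < ρ := by rw [hρ]; linarith
  have hmem : (ρ : ℂ) ∈ Metric.ball (0 : ℂ) 1 := by
    rw [mem_ball_zero_iff]
    simp [Complex.norm_real, abs_of_pos hρ0, hρ1]
  have hS : Summable fun k => c k * (ρ:ℂ) ^ k := (hsum _ hmem).summable
  have ht : Tendsto (fun k => ‖c k * (ρ:ℂ)^k‖) atTop (nhds 0) := by
    simpa using hS.tendsto_atTop_zero.norm
  obtain ⟨M, hM⟩ := ht.bddAbove_range
  have hMb : ∀ k, ‖c k‖ * ρ ^ k ≤ M := by
    intro k
    have := hM (Set.mem_range_self k)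
    simpa [norm_mul, norm_pow, Complex.norm_real, abs_of_pos hρ0] using this
  have hgeo : Summable fun k => M * (r / ρ) ^ k := by
    apply Summable.mul_left
    exact summable_geometric_of_lt_one (by positivity) (by rw [div_lt_one hρ0]; exact hrρ)
  apply Summable.of_nonneg_of_le (fun k => by positivity) _ hgeo
  intro k
  have hk : ‖c k‖ * r ^ k = (‖c k‖ * ρ ^ k) * (r / ρ) ^ k := by
    have hne : ρ ^ k ≠ 0 := by positivity
    field_simp [div_pow]
    rw [mul_assoc _ (ρ ^ k), ← mul_pow, show ρ * (r / ρ) = r by field_simp]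
  rw [hk]
  exact mul_le_mul_of_nonneg_right (hMb k) (by positivity)

private lemma carath_coeff_int (p : ℂ → ℂ) (c : ℕ → ℂ)
    (hsum : ∀ z ∈ Metric.ball (0 : ℂ) 1, HasSum (fun n : ℕ => c n * z ^ n) (p z))
    {r : ℝ} (hr0 : 0 < r) (hr1 : r < 1)
    (hs : Summable fun k => ‖c k‖ * r ^ k) (m : ℤ) :
    (∫ θ in Set.Ioc (0:ℝ) (2*Real.pi),
        p ((r:ℂ) * Complex.exp (θ * I)) * Complex.exp (-(m:ℂ) * θ * I))
      = if 0 ≤ m then (2*Real.pi : ℂ) * c m.toNat * (r:ℂ) ^ m.toNat else 0 := by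
  set f : ℕ → ℝ → ℂ :=
    fun k θ => c k * ((r:ℂ) * Complex.exp (θ * I)) ^ k * Complex.exp (-(m:ℂ) * θ * I) with hf
  have hptw : ∀ θ : ℝ, p ((r:ℂ) * Complex.exp (θ * I)) * Complex.exp (-(m:ℂ) * θ * I)
      = ∑' k, f k θ := by
    intro θ
    exact ((hsum _ (carath_mem hr0 hr1 θ)).mul_right _).tsum_eq.symm
  have hcont : ∀ k, Continuous (f k) := by
    intro k
    apply Continuous.mul
    · apply Continuous.mul continuous_const
      apply Continuous.pow
      exact continuous_const.mul (Complex.continuous_exp.comp (by continuity))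
    · exact Complex.continuous_exp.comp (by continuity)
  have hnorm : ∀ k θ, ‖f k θ‖ = ‖c k‖ * r ^ k := by
    intro k θ
    rw [hf]
    simp only [norm_mul, norm_pow]
    have h2 : ‖Complex.exp (-(m:ℂ) * θ * I)‖ = 1 := by
      rw [Complex.norm_exp]; simp
    rw [h2, mul_one, Complex.norm_exp_ofReal_mul_I, Complex.norm_real, Real.norm_eq_abs,
      abs_of_pos hr0, mul_one]
  have hint : ∀ k, Integrable (f k) (volume.restrict (Set.Ioc (0:ℝ) (2*Real.pi))) :=
    fun k => ((hcont k).integrableOn_Ioc).integrable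
  have hsumnorm : Summable fun k => ∫ θ in Set.Ioc (0:ℝ) (2*Real.pi), ‖f k θ‖ := by
    have : ∀ k, (∫ θ in Set.Ioc (0:ℝ) (2*Real.pi), ‖f k θ‖)
        = (2*Real.pi) * (‖c k‖ * r ^ k) := by
      intro k
      simp only [hnorm]
      rw [setIntegral_const, Real.volume_real_Ioc_of_le (by positivity), sub_zero,
        smul_eq_mul]
    simp only [this]
    exact hs.mul_left _
  have hswap := integral_tsum_of_summable_integral_norm hint hsumnorm
  calc (∫ θ in Set.Ioc (0:ℝ) (2*Real.pi),
        p ((r:ℂ) * Complex.exp (θ * I)) * Complex.exp (-(m:ℂ) * θ * I))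
      = ∫ θ in Set.Ioc (0:ℝ) (2*Real.pi), ∑' k, f k θ := by
        simp only [hptw]
    _ = ∑' k, ∫ θ in Set.Ioc (0:ℝ) (2*Real.pi), f k θ := hswap.symm
    _ = ∑' k, (c k * (r:ℂ) ^ k) * (if ((k:ℤ) - m) = 0 then (2*Real.pi : ℂ) else 0) := by
        congr 1
        funext k
        have hfk : ∀ θ : ℝ, f k θ
            = (c k * (r:ℂ)^k) * Complex.exp ((((k:ℤ) - m : ℤ):ℂ) * θ * I) := by
          intro θ
          have h1 : (((k:ℤ) - m : ℤ):ℂ) * θ * I = (k:ℂ)*(θ*I) + (-(m:ℂ)*θ*I) := by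
            push_cast; ring
          rw [hf]
          simp only
          rw [mul_pow, ← Complex.exp_nat_mul, h1, Complex.exp_add]
          ring
        simp only [hfk]
        rw [MeasureTheory.integral_const_mul,
          ← intervalIntegral.integral_of_le (by positivity : (0:ℝ) ≤ 2*Real.pi),
          carath_int_exp]
    _ = _ := by
        rcases le_or_gt 0 m with hm | hm
        · rw [if_pos hm]
          rw [tsum_eq_single m.toNat]
          · rw [if_pos (by simp [Int.toNat_of_nonneg hm])]
            ring
          · intro k hk
            rw [if_neg, mul_zero]
            intro hcon
            apply hk
            have : (k:ℤ) = m := by linarith [sub_eq_zero.mp hcon]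
            omega
        · rw [if_neg (not_le.mpr hm)]
          have : ∀ k : ℕ, (c k * (r:ℂ) ^ k) * (if ((k:ℤ) - m) = 0 then (2*Real.pi : ℂ) else 0) = 0 := by
            intro k
            rw [if_neg, mul_zero]
            intro hcon
            have : (k:ℤ) = m := by linarith [sub_eq_zero.mp hcon]
            omega
          simp only [this, tsum_zero]

/-- Carathéodory's lemma: if `p` is holomorphic on the unit disc with `p(0) = 1`,
`Re p > 0` on the disc, and `p(z) = Σ_{n≥0} c_n zⁿ` with `c_0 = 1`, then `|c_n| ≤ 2`
for all `n ≥ 1`. -/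
theorem caratheodory_coeff_bound (p : ℂ → ℂ) (c : ℕ → ℂ)
    (hdiff : DifferentiableOn ℂ p (Metric.ball (0 : ℂ) 1))
    (hp0 : p 0 = 1)
    (hre : ∀ z ∈ Metric.ball (0 : ℂ) 1, 0 < (p z).re)
    (hc0 : c 0 = 1)
    (hsum : ∀ z ∈ Metric.ball (0 : ℂ) 1, HasSum (fun n : ℕ => c n * z ^ n) (p z)) :
    ∀ n : ℕ, 1 ≤ n → ‖c n‖ ≤ 2 := by
  intro n hn
  -- main bound for each radius r < 1
  have main : ∀ r : ℝ, 0 < r → r < 1 → ‖c n‖ * r ^ n ≤ 2 := by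
    intro r hr0 hr1
    have hs := carath_summable c p hsum hr0 hr1
    have hcontp : Continuous fun θ : ℝ => p ((r:ℂ) * Complex.exp (θ * I)) := by
      apply hdiff.continuousOn.comp_continuous
      · continuity
      · exact carath_mem hr0 hr1
    -- the three integrals
    have hA := carath_coeff_int p c hsum hr0 hr1 hs (n : ℤ)
    have hB := carath_coeff_int p c hsum hr0 hr1 hs (-(n : ℤ))
    have hC := carath_coeff_int p c hsum hr0 hr1 hs 0
    rw [if_pos (by positivity)] at hA
    rw [if_neg (by omega)] at hB
    rw [if_pos le_rfl] at hC
    simp only [Int.toNat_zero, pow_zero, mul_one, hc0, Int.toNat_natCast] at hA hB hC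
    push_cast at hA hB
    simp only [Int.cast_zero, neg_zero, zero_mul, Complex.exp_zero, mul_one] at hC
    -- integrands
    set g1 : ℝ → ℂ := fun θ => p ((r:ℂ) * Complex.exp (θ * I)) * Complex.exp (-(n:ℂ) * θ * I)
      with hg1
    set g2 : ℝ → ℂ := fun θ => p ((r:ℂ) * Complex.exp (θ * I)) * Complex.exp ((n:ℂ) * θ * I)
      with hg2
    have hBcast : (∫ θ in Set.Ioc (0:ℝ) (2*Real.pi), g2 θ) = 0 := by
      rw [hg2]
      simp only [neg_neg] at hB
      exact hB
    have hcont1 : Continuous g1 := by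
      exact hcontp.mul (Complex.continuous_exp.comp (by continuity))
    have hcont2 : Continuous g2 := by
      exact hcontp.mul (Complex.continuous_exp.comp (by continuity))
    have hint1 : Integrable g1 (volume.restrict (Set.Ioc (0:ℝ) (2*Real.pi))) :=
      (hcont1.integrableOn_Ioc).integrable
    have hint2 : Integrable (fun θ => (starRingEnd ℂ) (g2 θ))
        (volume.restrict (Set.Ioc (0:ℝ) (2*Real.pi))) :=
      ((Complex.continuous_conj.comp hcont2).integrableOn_Ioc).integrable
    -- key identity: A = ∫ 2 Re p * e^{-inθ}
    have hkey : (2*Real.pi : ℂ) * c n * (r:ℂ) ^ n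
        = ∫ θ in Set.Ioc (0:ℝ) (2*Real.pi),
            ((2 * (p ((r:ℂ) * Complex.exp (θ * I))).re : ℝ) : ℂ)
              * Complex.exp (-(n:ℂ) * θ * I) := by
      have step1 : (2*Real.pi : ℂ) * c n * (r:ℂ) ^ n
          = (∫ θ in Set.Ioc (0:ℝ) (2*Real.pi), g1 θ)
            + (starRingEnd ℂ) (∫ θ in Set.Ioc (0:ℝ) (2*Real.pi), g2 θ) := by
        rw [hBcast, map_zero, add_zero, ← hA]
      rw [step1, ← integral_conj, ← integral_add hint1 hint2]
      congr 1
      funext θ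
      have hce : (starRingEnd ℂ) (Complex.exp ((n:ℂ) * θ * I)) = Complex.exp (-(n:ℂ) * θ * I) := by
        rw [← Complex.exp_conj]
        congr 1
        simp [Complex.ext_iff]
      have hconj : (starRingEnd ℂ) (g2 θ)
          = (starRingEnd ℂ) (p ((r:ℂ) * Complex.exp (θ * I))) * Complex.exp (-(n:ℂ) * θ * I) := by
        rw [hg2]
        simp only [map_mul, hce]
      rw [hconj, hg1]
      simp only
      rw [← add_mul]
      congr 1
      rw [Complex.add_conj]
    -- norm bound
    have hposint : ∀ θ : ℝ,
        ‖((2 * (p ((r:ℂ) * Complex.exp (θ * I))).re : ℝ) : ℂ) * Complex.exp (-(n:ℂ) * θ * I)‖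
          = 2 * (p ((r:ℂ) * Complex.exp (θ * I))).re := by
      intro θ
      have h2 : ‖Complex.exp (-(n:ℂ) * θ * I)‖ = 1 := by
        rw [Complex.norm_exp]; simp
      rw [norm_mul, h2, mul_one,
        Complex.norm_real, Real.norm_eq_abs, abs_of_pos]
      have := hre _ (carath_mem hr0 hr1 θ)
      linarith
    have hbound : ‖(2*Real.pi : ℂ) * c n * (r:ℂ) ^ n‖ ≤ 2 * (2*Real.pi) := by
      rw [hkey]
      calc ‖∫ θ in Set.Ioc (0:ℝ) (2*Real.pi),
            ((2 * (p ((r:ℂ) * Complex.exp (θ * I))).re : ℝ) : ℂ)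
              * Complex.exp (-(n:ℂ) * θ * I)‖
          ≤ ∫ θ in Set.Ioc (0:ℝ) (2*Real.pi),
            ‖((2 * (p ((r:ℂ) * Complex.exp (θ * I))).re : ℝ) : ℂ)
              * Complex.exp (-(n:ℂ) * θ * I)‖ := norm_integral_le_integral_norm _
        _ = ∫ θ in Set.Ioc (0:ℝ) (2*Real.pi),
            2 * (p ((r:ℂ) * Complex.exp (θ * I))).re := by
              simp only [hposint]
        _ = 2 * (∫ θ in Set.Ioc (0:ℝ) (2*Real.pi),
            (p ((r:ℂ) * Complex.exp (θ * I))).re) := by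
              rw [MeasureTheory.integral_const_mul]
        _ = 2 * ((∫ θ in Set.Ioc (0:ℝ) (2*Real.pi),
            p ((r:ℂ) * Complex.exp (θ * I)))).re := by
              congr 1
              exact Complex.reCLM.integral_comp_comm (hcontp.integrableOn_Ioc).integrable
        _ = 2 * (2*Real.pi) := by rw [hC]; simp
    have hnormval : ‖(2*Real.pi : ℂ) * c n * (r:ℂ) ^ n‖
        = (2*Real.pi) * (‖c n‖ * r ^ n) := by
      simp only [norm_mul, norm_pow, Complex.norm_real, Real.norm_eq_abs]
      rw [abs_of_pos hr0, abs_of_pos Real.pi_pos, Complex.norm_two]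
      ring
    rw [hnormval] at hbound
    have hπ : (0:ℝ) < 2*Real.pi := by positivity
    nlinarith [hbound]
  -- take r → 1⁻
  have hten : Tendsto (fun r : ℝ => ‖c n‖ * r ^ n) (nhdsWithin 1 (Set.Iio 1))
      (nhds (‖c n‖)) := by
    have : Tendsto (fun r : ℝ => ‖c n‖ * r ^ n) (nhds 1)
        (nhds (‖c n‖ * 1 ^ n)) := by
      exact (continuous_const.mul (continuous_pow n)).tendsto 1
    simpa using this.mono_left nhdsWithin_le_nhds
  apply le_of_tendsto hten
  filter_upwards [Ioo_mem_nhdsLT (by norm_num : (0:ℝ) < 1)] with r hr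
  exact main r hr.1 hr.2
end

section
/- Let (h₁,h₂) : D² → C² be holomorphic with h(0)=0, Dh(0) = -I₂, and Re(h_j(z)/z_j) ≤ 0 whenever max(|z₁|,|z₂|) = |z_j| > 0. Write h₁(z) = -z₁ + Σ_{|α|≥2} c_α z^α. Then for every n ≥ 1, |c_{(1,n)}| ≤ 2. -/
open Complex

def polydisc2 : Set (ℂ × ℂ) := {z | ‖z.1‖ < 1 ∧ ‖z.2‖ < 1}

/-- The class `M(D²)` of infinitesimal generators on the unit polydisc in `ℂ²`. -/
def memM2 (h : ℂ × ℂ → ℂ × ℂ) : Prop :=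
  DifferentiableOn ℂ h polydisc2 ∧ h 0 = 0 ∧
    fderiv ℂ h 0 = -ContinuousLinearMap.id ℂ (ℂ × ℂ) ∧
    (∀ z ∈ polydisc2, z.1 ≠ 0 → ‖z.2‖ ≤ ‖z.1‖ → ((h z).1 / z.1).re ≤ 0) ∧
    (∀ z ∈ polydisc2, z.2 ≠ 0 → ‖z.1‖ ≤ ‖z.2‖ → ((h z).2 / z.2).re ≤ 0)

open MeasureTheory Real Set

noncomputable def ee (t : ℝ) : ℂ := Complex.exp (t * Complex.I)

lemma abs_ee (t : ℝ) : ‖ee t‖ = 1 := Complex.norm_exp_ofReal_mul_I t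

lemma ee_cont : Continuous ee := by
  unfold ee; exact Complex.continuous_exp.comp (Complex.continuous_ofReal.mul continuous_const)

lemma star_ree (r t : ℝ) : star ((r:ℂ) * ee t) = (r:ℂ) * ee (-t) := by
  simp only [ee, star_mul', Complex.star_def, ← Complex.exp_conj, map_mul, Complex.conj_ofReal,
    Complex.conj_I, Complex.ofReal_neg, mul_neg, neg_mul, mul_comm]

lemma star_ee (t : ℝ) : star (ee t) = ee (-t) := by
  have := star_ree 1 t
  simpa using this

lemma star_oR (r : ℝ) : star ((r : ℂ)) = ((r : ℂ)) := by
  rw [Complex.star_def, Complex.conj_ofReal]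

lemma intExp (j : ℤ) :
    ∫ θ in Set.Ioc (0:ℝ) (2*π), Complex.exp (j * θ * Complex.I) =
      if j = 0 then ((2*π : ℝ) : ℂ) else 0 := by
  rw [← intervalIntegral.integral_of_le (by positivity : (0:ℝ) ≤ 2*π)]
  rcases eq_or_ne j 0 with rfl | hj
  · simp
  · have hc : (j : ℂ) * Complex.I ≠ 0 := by
      simp [Complex.ext_iff, hj]
    have := integral_exp_mul_complex (a := 0) (b := 2*π) hc
    simp only [if_neg hj]
    rw [show (fun θ : ℝ => Complex.exp (j * θ * Complex.I)) =
        fun θ : ℝ => Complex.exp ((j * Complex.I) * θ) from funext fun θ => by ring_nf, this]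
    rw [show (j : ℂ) * Complex.I * ((2*π : ℝ) : ℂ) = j * (2 * π * Complex.I) by push_cast; ring]
    simp [Complex.exp_int_mul_two_pi_mul_I]

noncomputable def SS : Set (ℝ × ℝ) := Set.Ioc 0 (2*π) ×ˢ Set.Ioc 0 (2*π)

lemma SS_meas : MeasurableSet SS := measurableSet_Ioc.prod measurableSet_Ioc

lemma SS_vol : volume SS ≠ ⊤ := by
  rw [SS, MeasureTheory.Measure.volume_eq_prod, MeasureTheory.Measure.prod_prod]
  simp [Real.volume_Ioc]
  finiteness

lemma intS_mul (A B : ℝ → ℂ) :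
    ∫ p in SS, A p.1 * B p.2 =
      (∫ θ in Set.Ioc (0:ℝ) (2*π), A θ) * ∫ φ in Set.Ioc (0:ℝ) (2*π), B φ := by
  rw [SS, MeasureTheory.Measure.volume_eq_prod, setIntegral_prod_mul]

lemma integrableOn_SS {f : ℝ × ℝ → ℂ} (hf : Continuous f) : IntegrableOn f SS := by
  have h1 : IntegrableOn f (Set.Icc 0 (2*π) ×ˢ Set.Icc 0 (2*π)) :=
    hf.continuousOn.integrableOn_compact (isCompact_Icc.prod isCompact_Icc)
  exact h1.mono_set (Set.prod_mono Set.Ioc_subset_Icc_self Set.Ioc_subset_Icc_self)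

lemma cont_sep (K : ℂ) (j k : ℤ) :
    Continuous fun p : ℝ × ℝ => K * Complex.exp ((j:ℂ)*p.1*Complex.I) * Complex.exp ((k:ℂ)*p.2*Complex.I) := by
  apply Continuous.mul
  · exact continuous_const.mul (Complex.continuous_exp.comp
      ((continuous_const.mul (Complex.continuous_ofReal.comp continuous_fst)).mul continuous_const))
  · exact Complex.continuous_exp.comp
      ((continuous_const.mul (Complex.continuous_ofReal.comp continuous_snd)).mul continuous_const)

lemma intS_sep (cc : ℂ) (j k : ℤ) :
    (∫ p in SS, cc * Complex.exp ((j:ℂ)*p.1*Complex.I) * Complex.exp ((k:ℂ)*p.2*Complex.I))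
    = cc * ((if j = 0 then ((2*π:ℝ):ℂ) else 0) * (if k = 0 then ((2*π:ℝ):ℂ) else 0)) := by
  rw [intS_mul (fun θ => cc * Complex.exp ((j:ℂ)*θ*Complex.I))
    (fun φ => Complex.exp ((k:ℂ)*φ*Complex.I)), MeasureTheory.integral_const_mul, intExp, intExp]
  ring

lemma term_shape (cc : ℂ) (r : ℝ) (a b m : ℕ) (θ φ : ℝ) :
    cc * ((r:ℂ) * ee θ)^a * ((r:ℂ) * ee φ)^b * ((r:ℂ) * ee (-θ)) * ee (-(m:ℝ)*φ)
    = (cc * (r:ℂ)^(a+b+1)) * Complex.exp ((((a:ℤ)-1 : ℤ):ℂ)*θ*Complex.I)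
        * Complex.exp ((((b:ℤ)-(m:ℤ) : ℤ):ℂ)*φ*Complex.I) := by
  simp only [ee, mul_pow, ← Complex.exp_nat_mul, pow_add, pow_one]
  push_cast
  rw [show ((a:ℂ)-1)*θ*Complex.I = (a:ℂ)*(θ*Complex.I) + (-θ*Complex.I) by ring,
    show ((b:ℂ)-m)*φ*Complex.I = (b:ℂ)*(φ*Complex.I) + (-(m:ℂ)*φ*Complex.I) by ring,
    Complex.exp_add, Complex.exp_add]
  ring

lemma term_shape' (cc : ℂ) (r : ℝ) (a b m : ℕ) (θ φ : ℝ) :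
    cc * ((r:ℂ) * ee (-θ))^a * ((r:ℂ) * ee (-φ))^b * ((r:ℂ) * ee θ) * ee (-(m:ℝ)*φ)
    = (cc * (r:ℂ)^(a+b+1)) * Complex.exp ((((1:ℤ)-a : ℤ):ℂ)*θ*Complex.I)
        * Complex.exp (((-(b:ℤ)-(m:ℤ) : ℤ):ℂ)*φ*Complex.I) := by
  simp only [ee, mul_pow, ← Complex.exp_nat_mul, pow_add, pow_one]
  push_cast
  rw [show ((1:ℂ)-a)*θ*Complex.I = (a:ℂ)*(-θ*Complex.I) + θ*Complex.I by ring,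
    show (-(b:ℂ)-m)*φ*Complex.I = (b:ℂ)*(-φ*Complex.I) + (-(m:ℂ)*φ*Complex.I) by ring,
    Complex.exp_add, Complex.exp_add]
  ring

/-- For `h = (h₁,h₂) ∈ M(D²)` with `h₁(z) = -z₁ + Σ_{|α|≥2} c_α z^α`, one has
`|c_{(1,n)}| ≤ 2` for all `n ≥ 1`. -/
theorem coeff_one_n_le_two (h : ℂ × ℂ → ℂ × ℂ) (hM : memM2 h) (c : ℕ × ℕ → ℂ)
    (hc : ∀ z ∈ polydisc2, HasSum (fun α : ℕ × ℕ => c α * z.1 ^ α.1 * z.2 ^ α.2) ((h z).1))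
    (h00 : c (0, 0) = 0) (h10 : c (1, 0) = -1) (h01 : c (0, 1) = 0) :
    ∀ n : ℕ, 1 ≤ n → ‖c (1, n)‖ ≤ 2 := by
  obtain ⟨hdiff, -, -, hre1, -⟩ := hM
  intro n hn
  have hπ : (0:ℝ) < π := Real.pi_pos
  have key : ∀ r : ℝ, 0 < r → r < 1 → ‖c (1, n)‖ * r ^ n ≤ 2 := by
    intro r hr0 hr1
    set z : ℝ × ℝ → ℂ × ℂ := fun p => ((r:ℂ) * ee p.1, (r:ℂ) * ee p.2) with hzdef
    have habs : ∀ t : ℝ, ‖(r:ℂ) * ee t‖ = r := by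
      intro t; rw [norm_mul, abs_ee, Complex.norm_real, Real.norm_eq_abs, abs_of_pos hr0, mul_one]
    have hmem : ∀ p : ℝ × ℝ, z p ∈ polydisc2 := by
      intro p
      exact ⟨by simpa [z, abs_ee, abs_of_pos hr0] using hr1, by simpa [z, abs_ee, abs_of_pos hr0] using hr1⟩
    have hne : ∀ p : ℝ × ℝ, (z p).1 ≠ 0 := by
      intro p hcontra
      have h1 := habs p.1
      rw [show ((r:ℂ) * ee p.1) = (z p).1 from rfl, hcontra] at h1
      simp at h1; exact absurd h1.symm (ne_of_gt hr0)
    set g : ℝ × ℝ → ℂ := fun p => (h (z p)).1 * ((r:ℂ) * ee (-p.1)) with hgdef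
    -- Re g ≤ 0
    have hzc : ∀ p : ℝ × ℝ, (z p).1 * ((r:ℂ) * ee (-p.1)) = ((r^2 : ℝ) : ℂ) := by
      intro p
      show (r:ℂ) * ee p.1 * ((r:ℂ) * ee (-p.1)) = _
      rw [mul_mul_mul_comm]
      simp only [ee, ← Complex.exp_add]
      push_cast
      rw [show (p.1:ℂ)*Complex.I + -(p.1:ℂ)*Complex.I = 0 by ring, Complex.exp_zero]
      ring
    have hre : ∀ p, (g p).re ≤ 0 := by
      intro p
      have h4 := hre1 (z p) (hmem p) (hne p)
        (le_of_eq (by show ‖(r:ℂ) * ee p.2‖ = ‖(r:ℂ) * ee p.1‖;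
                      rw [habs, habs]))
      have hgeq : g p = ((h (z p)).1 / (z p).1) * ((r^2 : ℝ) : ℂ) := by
        rw [← hzc p]
        show (h (z p)).1 * ((r:ℂ) * ee (-p.1)) = _
        have h6 : (h (z p)).1 / (z p).1 * ((z p).1 * ((r:ℂ)*ee (-p.1)))
            = (h (z p)).1 * ((r:ℂ)*ee (-p.1)) := by
          rw [← mul_assoc, div_mul_cancel₀ _ (hne p)]
        rw [h6]
      rw [hgeq]
      have hmre : (((h (z p)).1 / (z p).1) * ((r^2:ℝ):ℂ)).re
          = ((h (z p)).1 / (z p).1).re * r^2 := by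
        simp [Complex.mul_re, ← Complex.ofReal_pow]
      rw [hmre]
      have h5 : (0:ℝ) ≤ r^2 := sq_nonneg r
      nlinarith
    -- continuity
    have hzcont : Continuous z :=
      (continuous_const.mul (ee_cont.comp continuous_fst)).prodMk
        (continuous_const.mul (ee_cont.comp continuous_snd))
    have hgcont : Continuous g := by
      have h1 : Continuous fun p : ℝ × ℝ => h (z p) :=
        hdiff.continuousOn.comp_continuous hzcont hmem
      exact (h1.fst).mul
        (continuous_const.mul (ee_cont.comp (continuous_fst.neg)))
    -- HasSum pointwise
    have hsum : ∀ p : ℝ × ℝ, HasSum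
        (fun α : ℕ × ℕ => c α * ((r:ℂ)*ee p.1)^α.1 * ((r:ℂ)*ee p.2)^α.2 * ((r:ℂ)*ee (-p.1)))
        (g p) := fun p => (hc (z p) (hmem p)).mul_right _
    set T : ℕ → ℕ × ℕ → ℝ × ℝ → ℂ := fun m α p =>
      (c α * ((r:ℂ)*ee p.1)^α.1 * ((r:ℂ)*ee p.2)^α.2 * ((r:ℂ)*ee (-p.1))
        + star (c α * ((r:ℂ)*ee p.1)^α.1 * ((r:ℂ)*ee p.2)^α.2 * ((r:ℂ)*ee (-p.1))))
        * ee (-(m:ℝ)*p.2) with hTdef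
    set F : ℕ → ℝ × ℝ → ℂ := fun m p => (g p + star (g p)) * ee (-(m:ℝ)*p.2) with hFdef
    have hTsum : ∀ m p, HasSum (fun α => T m α p) (F m p) :=
      fun m p => ((hsum p).add (hsum p).star).mul_right _
    -- continuity of T, F
    have hTcont : ∀ m α, Continuous (T m α) := by
      intro m α
      apply Continuous.mul
      · apply Continuous.add
        · exact (((continuous_const.mul
            ((continuous_const.mul (ee_cont.comp continuous_fst)).pow _)).mul
            ((continuous_const.mul (ee_cont.comp continuous_snd)).pow _)).mul
            (continuous_const.mul (ee_cont.comp continuous_fst.neg)))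
        · exact continuous_star.comp (((continuous_const.mul
            ((continuous_const.mul (ee_cont.comp continuous_fst)).pow _)).mul
            ((continuous_const.mul (ee_cont.comp continuous_snd)).pow _)).mul
            (continuous_const.mul (ee_cont.comp continuous_fst.neg)))
      · exact ee_cont.comp (continuous_const.mul continuous_snd)
    have hFcont : ∀ m, Continuous (F m) := by
      intro m
      exact (hgcont.add (continuous_star.comp hgcont)).mul
        (ee_cont.comp (continuous_const.mul continuous_snd))
    -- summability of coefficient norms
    have hmem0 : (((r:ℂ)), ((r:ℂ))) ∈ polydisc2 := by
      constructor <;> simpa [Complex.norm_real, Real.norm_eq_abs, abs_of_pos hr0] using hr1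
    have hS : Summable (fun α : ℕ × ℕ => ‖c α‖ * r^α.1 * r^α.2) := by
      have h1 := (hc _ hmem0).summable
      have h2 := summable_norm_iff.mpr h1
      have h3 : (fun α : ℕ × ℕ => ‖c α * ((r:ℂ),(r:ℂ)).1 ^ α.1 * ((r:ℂ),(r:ℂ)).2 ^ α.2‖)
          = fun α : ℕ × ℕ => ‖c α‖ * r^α.1 * r^α.2 := by
        funext α
        simp [norm_mul, norm_pow, Complex.norm_real, Real.norm_eq_abs, abs_of_pos hr0]
      rwa [h3] at h2
    -- norm bound on terms
    have hTbound : ∀ m α (p : ℝ × ℝ), ‖T m α p‖ ≤ 2*r*(‖c α‖ * r^α.1 * r^α.2) := by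
      intro m α p
      have h1 : ‖c α * ((r:ℂ)*ee p.1)^α.1 * ((r:ℂ)*ee p.2)^α.2 * ((r:ℂ)*ee (-p.1))‖
          = ‖c α‖ * r^α.1 * r^α.2 * r := by
        simp only [norm_mul, norm_pow, habs]
      rw [hTdef]
      calc ‖(c α * ((r:ℂ)*ee p.1)^α.1 * ((r:ℂ)*ee p.2)^α.2 * ((r:ℂ)*ee (-p.1))
            + star (c α * ((r:ℂ)*ee p.1)^α.1 * ((r:ℂ)*ee p.2)^α.2 * ((r:ℂ)*ee (-p.1))))
            * ee (-(m:ℝ)*p.2)‖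
          = ‖c α * ((r:ℂ)*ee p.1)^α.1 * ((r:ℂ)*ee p.2)^α.2 * ((r:ℂ)*ee (-p.1))
            + star (c α * ((r:ℂ)*ee p.1)^α.1 * ((r:ℂ)*ee p.2)^α.2 * ((r:ℂ)*ee (-p.1)))‖ := by
            rw [norm_mul, abs_ee, mul_one]
        _ ≤ ‖c α * ((r:ℂ)*ee p.1)^α.1 * ((r:ℂ)*ee p.2)^α.2 * ((r:ℂ)*ee (-p.1))‖
            + ‖star (c α * ((r:ℂ)*ee p.1)^α.1 * ((r:ℂ)*ee p.2)^α.2 * ((r:ℂ)*ee (-p.1)))‖ :=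
            norm_add_le _ _
        _ = 2*r*(‖c α‖ * r^α.1 * r^α.2) := by
            rw [norm_star, h1]; ring
    -- interchange of sum and integral
    have hint : ∀ m : ℕ, HasSum (fun α => ∫ p in SS, T m α p) (∫ p in SS, F m p) := by
      intro m
      have h1 : ∀ α, Integrable (T m α) (volume.restrict SS) :=
        fun α => integrableOn_SS (hTcont m α)
      have h2 : Summable (fun α => ∫ p in SS, ‖T m α p‖) := by
        apply Summable.of_nonneg_of_le
          (fun α => integral_nonneg (fun p => norm_nonneg _)) (fun α => ?_)
          ((hS.mul_left (2*r)).mul_left (volume SS).toReal)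
        calc (∫ p in SS, ‖T m α p‖)
            ≤ ∫ _p in SS, 2*r*(‖c α‖ * r^α.1 * r^α.2) := by
              apply setIntegral_mono_on (h1 α).norm _ SS_meas (fun p _ => hTbound m α p)
              exact integrableOn_const SS_vol
          _ = (volume SS).toReal * (2*r*(‖c α‖ * r^α.1 * r^α.2)) := by
              rw [setIntegral_const, smul_eq_mul, Measure.real]
      have h3 := MeasureTheory.hasSum_integral_of_summable_integral_norm h1 h2
      rwa [show (fun p => ∑' α, T m α p) = F m from funext fun p => (hTsum m p).tsum_eq] at h3
    -- per-term integral value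
    have hterm : ∀ (m : ℕ) (α : ℕ × ℕ), (∫ p in SS, T m α p)
        = (c α * (r:ℂ)^(α.1+α.2+1)) * ((if ((α.1:ℤ)-1) = 0 then ((2*π:ℝ):ℂ) else 0)
            * (if ((α.2:ℤ)-(m:ℤ)) = 0 then ((2*π:ℝ):ℂ) else 0))
          + (star (c α) * (r:ℂ)^(α.1+α.2+1)) * ((if ((1:ℤ)-(α.1:ℤ)) = 0 then ((2*π:ℝ):ℂ) else 0)
            * (if (-(α.2:ℤ)-(m:ℤ)) = 0 then ((2*π:ℝ):ℂ) else 0)) := by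
      intro m α
      obtain ⟨a, b⟩ := α
      have hst : ∀ p : ℝ × ℝ,
          star (c (a,b) * ((r:ℂ)*ee p.1)^a * ((r:ℂ)*ee p.2)^b * ((r:ℂ)*ee (-p.1)))
          = star (c (a,b)) * ((r:ℂ)*ee (-p.1))^a * ((r:ℂ)*ee (-p.2))^b * ((r:ℂ)*ee p.1) := by
        intro p
        simp only [star_mul', star_pow, star_ee, star_oR, neg_neg]
      have e1 : ∀ p : ℝ × ℝ, T m (a,b) p =
          (c (a,b) * (r:ℂ)^(a+b+1)) * Complex.exp (((((a:ℤ)-1:ℤ)):ℂ)*p.1*Complex.I)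
            * Complex.exp (((((b:ℤ)-(m:ℤ):ℤ)):ℂ)*p.2*Complex.I)
          + (star (c (a,b)) * (r:ℂ)^(a+b+1)) * Complex.exp ((((1:ℤ)-(a:ℤ):ℤ):ℂ)*p.1*Complex.I)
            * Complex.exp (((-(b:ℤ)-(m:ℤ):ℤ):ℂ)*p.2*Complex.I) := by
        intro p
        rw [hTdef]
        show (_ + _) * ee (-(m:ℝ)*p.2) = _
        rw [add_mul, hst p, term_shape (c (a,b)) r a b m p.1 p.2,
          term_shape' (star (c (a,b))) r a b m p.1 p.2]
      simp only [e1]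
      rw [MeasureTheory.integral_add (integrableOn_SS (cont_sep _ _ _))
        (integrableOn_SS (cont_sep _ _ _)), intS_sep, intS_sep]
    -- value of ∫ F n
    have hvaln : (∫ p in SS, F n p)
        = (c (1,n) * (r:ℂ)^(n+2)) * (((2*π:ℝ):ℂ) * ((2*π:ℝ):ℂ)) := by
      refine (hint n).unique ?_
      have h4 : (fun α : ℕ × ℕ => ∫ p in SS, T n α p)
          = fun α : ℕ × ℕ => if α = ((1:ℕ), n) then
              (c (1,n) * (r:ℂ)^(n+2)) * (((2*π:ℝ):ℂ) * ((2*π:ℝ):ℂ)) else 0 := by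
        funext α
        obtain ⟨a, b⟩ := α
        rw [hterm n (a,b)]
        by_cases hab : (a, b) = ((1:ℕ), n)
        · obtain ⟨ha, hb⟩ : a = 1 ∧ b = n := by
            simpa [Prod.ext_iff] using hab
          subst ha; subst hb
          rw [if_pos rfl]
          dsimp only
          split_ifs <;>
            first
              | (exfalso; omega)
              | (rw [show (1:ℕ)+b+1 = b+2 by omega]; ring1)
        · rw [if_neg hab]
          have hab' : ¬(a = 1 ∧ b = n) := by simpa [Prod.ext_iff] using hab
          dsimp only
          split_ifs <;> first | ring1 | (exfalso; omega)
      rw [h4]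
      exact hasSum_ite_eq ((1:ℕ), n) _
    -- value of ∫ F 0
    have hval0 : (∫ p in SS, F 0 p)
        = ((-2 * ((2*π) * (2*π)) * r^2 : ℝ) : ℂ) := by
      have h5 : (∫ p in SS, F 0 p)
          = ((c (1,0) + star (c (1,0))) * (r:ℂ)^2) * (((2*π:ℝ):ℂ) * ((2*π:ℝ):ℂ)) := by
        refine (hint 0).unique ?_
        have h4 : (fun α : ℕ × ℕ => ∫ p in SS, T 0 α p)
            = fun α : ℕ × ℕ => if α = ((1:ℕ), (0:ℕ)) then
                ((c (1,0) + star (c (1,0))) * (r:ℂ)^2) * (((2*π:ℝ):ℂ) * ((2*π:ℝ):ℂ)) else 0 := by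
          funext α
          obtain ⟨a, b⟩ := α
          rw [hterm 0 (a,b)]
          by_cases hab : (a, b) = ((1:ℕ), (0:ℕ))
          · obtain ⟨ha, hb⟩ : a = 1 ∧ b = 0 := by
              simpa [Prod.ext_iff] using hab
            subst ha; subst hb
            rw [if_pos rfl]
            dsimp only
            split_ifs <;> first | (exfalso; omega) | (norm_num; try ring1) | ring1
          · rw [if_neg hab]
            have hab' : ¬(a = 1 ∧ b = 0) := by simpa [Prod.ext_iff] using hab
            dsimp only
            split_ifs <;> first | ring1 | (exfalso; omega)
        rw [h4]
        exact hasSum_ite_eq ((1:ℕ), (0:ℕ)) _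
      rw [h5, h10]
      have : star (-1 : ℂ) = -1 := by simp
      rw [this]
      push_cast
      ring
    -- pointwise norm identity
    have hFnorm : ∀ p : ℝ × ℝ, ‖F n p‖ = -(F 0 p).re := by
      intro p
      have h1 : F 0 p = g p + star (g p) := by
        rw [hFdef]
        show (g p + star (g p)) * ee (-((0:ℕ):ℝ)*p.2) = _
        norm_num [ee]
      have h2 : g p + star (g p) = ((2*(g p).re : ℝ) : ℂ) := by
        rw [Complex.star_def, Complex.add_conj]
      have h3 : ‖F n p‖ = |2*(g p).re| := by
        rw [hFdef]
        show ‖(g p + star (g p)) * ee (-((n:ℕ):ℝ)*p.2)‖ = _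
        rw [norm_mul, abs_ee, mul_one, h2,
          Complex.norm_real, Real.norm_eq_abs]
      rw [h3, h1, h2]
      rw [abs_of_nonpos (by linarith [hre p])]
      simp
    -- the inequality
    have hineq : ‖∫ p in SS, F n p‖ ≤ 2*((2*π)*(2*π))*r^2 := by
      calc ‖∫ p in SS, F n p‖ = ‖∫ p in SS, F n p‖ := rfl
        _ ≤ ∫ p in SS, ‖F n p‖ := norm_integral_le_integral_norm _
        _ = ∫ p in SS, -(F 0 p).re := by simp only [hFnorm]
        _ = -(∫ p in SS, (F 0 p).re) := by rw [integral_neg]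
        _ = -((∫ p in SS, F 0 p).re) := by
            have h7 := integral_re (μ := volume.restrict SS) (integrableOn_SS (hFcont 0))
            rw [show (∫ p in SS, (F 0 p).re) = ((∫ p in SS, F 0 p).re) from h7]
        _ = 2*((2*π)*(2*π))*r^2 := by
            rw [hval0, Complex.ofReal_re]
            ring
    have habs2 : ‖∫ p in SS, F n p‖
        = ‖c (1,n)‖ * r^(n+2) * ((2*π)*(2*π)) := by
      rw [hvaln]
      simp only [norm_mul, norm_pow, Complex.norm_real, Real.norm_eq_abs, abs_of_pos hr0,
        abs_of_pos (by positivity : (0:ℝ) < 2*π), abs_of_pos hπ]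
      try ring
    rw [habs2] at hineq
    have hA : (0:ℝ) < (2*π)*(2*π) := by positivity
    have hr2 : (0:ℝ) < r^2 := by positivity
    have hrw : r^(n+2) = r^n * r^2 := by ring
    rw [hrw] at hineq
    nlinarith [hineq, mul_pos hA hr2, norm_nonneg (c (1,n)), pow_pos hr0 n]
  -- limit r → 1⁻
  have hcont : Continuous fun r : ℝ => ‖c (1, n)‖ * r ^ n :=
    continuous_const.mul (continuous_pow n)
  have htend : Filter.Tendsto (fun r : ℝ => ‖c (1, n)‖ * r ^ n)
      (nhdsWithin 1 (Set.Iio 1)) (nhds (‖c (1, n)‖)) := by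
    have h1 := hcont.tendsto 1
    simp only [one_pow, mul_one] at h1
    exact tendsto_nhdsWithin_of_tendsto_nhds h1
  refine le_of_tendsto htend ?_
  filter_upwards [Ioo_mem_nhdsLT_of_mem (by norm_num : (1:ℝ) ∈ Set.Ioc (0:ℝ) 1)] with r hr
  exact key r hr.1 hr.2
end

section
/- Let (h₁,h₂) ∈ M(D²) with power series h₁(z) = -z₁ + Σ_{|α|≥2} c_α z^α. Then |c_{(0,2)}| ≤ 1, i.e. the coefficient of z₂² in h₁ has modulus at most 1. -/
open Complex MeasureTheory

lemma aux_int (n : ℤ) (hn : n ≠ 0) : ∫ φ in (0:ℝ)..(2*Real.pi), Complex.exp (n * φ * I) = 0 := by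
  have h : (n:ℂ)*I ≠ 0 := mul_ne_zero (Int.cast_ne_zero.mpr hn) I_ne_zero
  have h2 := integral_exp_mul_complex (a := 0) (b := 2*Real.pi) h
  have e1 : ∀ φ : ℝ, (n:ℂ) * I * φ = n * φ * I := fun φ => by ring
  simp only [e1] at h2
  rw [h2, show ((n:ℂ) * ((2*Real.pi:ℝ):ℂ) * I) = n * (2*Real.pi*I) by push_cast; ring]
  simp [Complex.exp_int_mul_two_pi_mul_I]

lemma term_eq (s t φ : ℝ) (hs : (s:ℂ) ≠ 0) (cα : ℂ) (a b : ℕ) :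
    cα * ((s:ℂ) * Complex.exp (2*φ*I))^a * ((s:ℂ) * Complex.exp ((↑φ+↑t)*I))^b
      / ((s:ℂ) * Complex.exp (2*φ*I))
    = (cα * (s:ℂ)^a * (s:ℂ)^b / s) *
        (Complex.exp ((b:ℂ)*t*I) * Complex.exp ((((2*a+b:ℕ):ℤ) - 2 : ℤ) * φ * I)) := by
  have key : Complex.exp ((b:ℂ)*t*I) * Complex.exp ((((2*a+b:ℕ):ℤ) - 2 : ℤ) * φ * I)
      * Complex.exp (2*φ*I)
      = Complex.exp (2*φ*I) ^ a * Complex.exp ((↑φ+↑t)*I) ^ b := by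
    rw [← Complex.exp_nat_mul, ← Complex.exp_nat_mul, ← Complex.exp_add, ← Complex.exp_add,
      ← Complex.exp_add]
    congr 1
    push_cast
    ring
  have expand : cα * ((s:ℂ) * Complex.exp (2*φ*I))^a * ((s:ℂ) * Complex.exp ((↑φ+↑t)*I))^b
      = (cα * ((s:ℂ)^a * (s:ℂ)^b)) *
        (Complex.exp ((b:ℂ)*t*I) * Complex.exp ((((2*a+b:ℕ):ℤ) - 2 : ℤ) * φ * I)
          * Complex.exp (2*φ*I)) := by
    rw [key]; ring
  rw [expand]
  have hE := Complex.exp_ne_zero (2*(φ:ℂ)*I)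
  field_simp

lemma term_norm (s t φ : ℝ) (hs : 0 < s) (cα : ℂ) (a b : ℕ) (n : ℤ) :
    ‖(cα * (s:ℂ)^a * (s:ℂ)^b / s) * (Complex.exp ((b:ℂ)*t*I) * Complex.exp ((n:ℂ) * φ * I))‖
      = ‖cα‖ * s^a * s^b / s := by
  simp [Complex.norm_exp, abs_of_pos hs, map_mul, map_div₀, map_pow,
    mul_re, I_re, I_im, ofReal_re, ofReal_im]

lemma key (h : ℂ × ℂ → ℂ × ℂ) (hM : memM2 h) (c : ℕ × ℕ → ℂ)
    (hc : ∀ z ∈ polydisc2, HasSum (fun α : ℕ × ℕ => c α * z.1 ^ α.1 * z.2 ^ α.2) ((h z).1))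
    (h10 : c (1, 0) = -1) (s t : ℝ) (hs0 : 0 < s) (hs1 : s < 1) :
    s * (c (0,2) * Complex.exp (2*t*I)).re ≤ 1 := by
  have hπ0 : (0:ℝ) < Real.pi := Real.pi_pos
  have hsC : (s:ℂ) ≠ 0 := ofReal_ne_zero.mpr hs0.ne'
  set T : Set ℝ := Set.Ioc (0:ℝ) (2*Real.pi) with hT
  -- the path
  set z : ℝ → ℂ × ℂ := fun φ => ((s:ℂ) * Complex.exp (2*φ*I), (s:ℂ) * Complex.exp ((↑φ+↑t)*I))
    with hz
  have habs1 : ∀ φ : ℝ, ‖(s:ℂ) * Complex.exp (2*φ*I)‖ = s := by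
    intro φ; simp [Complex.norm_exp, abs_of_pos hs0]
  have habs2 : ∀ φ : ℝ, ‖(s:ℂ) * Complex.exp ((↑φ+↑t)*I)‖ = s := by
    intro φ; simp [Complex.norm_exp, abs_of_pos hs0]
  have hne1 : ∀ φ : ℝ, ((s:ℂ) * Complex.exp (2*φ*I)) ≠ 0 :=
    fun φ => mul_ne_zero hsC (Complex.exp_ne_zero _)
  have hmem : ∀ φ : ℝ, z φ ∈ polydisc2 := by
    intro φ
    constructor
    · simpa [hz, habs1 φ, Complex.norm_exp, abs_of_pos hs0] using hs1
    · simpa [hz, habs2 φ, Complex.norm_exp, abs_of_pos hs0] using hs1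
  -- the terms
  set F : ℕ × ℕ → ℝ → ℂ := fun α φ =>
    (c α * (s:ℂ)^α.1 * (s:ℂ)^α.2 / s) *
      (Complex.exp ((α.2 : ℂ) * t * I) *
        Complex.exp ((((2*α.1 + α.2 : ℕ) : ℤ) - 2 : ℤ) * φ * I)) with hF
  have hFsum : ∀ φ : ℝ, HasSum (fun α => F α φ) ((h (z φ)).1 / (z φ).1) := by
    intro φ
    have h0 := (hc (z φ) (hmem φ)).div_const ((z φ).1)
    have he : (fun α : ℕ × ℕ => c α * (z φ).1 ^ α.1 * (z φ).2 ^ α.2 / (z φ).1)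
        = fun α => F α φ := by
      funext α
      exact term_eq s t φ hsC (c α) α.1 α.2
    rwa [he] at h0
  -- summability of norms
  have hSn : Summable (fun α : ℕ × ℕ => ‖c α‖ * s^α.1 * s^α.2 / s) := by
    have hmem0 : ((s:ℂ), (s:ℂ)) ∈ polydisc2 := by
      constructor <;> simpa [abs_of_pos hs0] using hs1
    have hss := (hc ((s:ℂ), (s:ℂ)) hmem0).summable
    have hnorm := summable_norm_iff.mpr hss
    have : (fun α : ℕ × ℕ => ‖c α * (s:ℂ)^α.1 * (s:ℂ)^α.2‖)
        = fun α : ℕ × ℕ => ‖c α‖ * s^α.1 * s^α.2 := by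
      funext α
      simp [map_mul, map_pow, abs_of_pos hs0]
    rw [this] at hnorm
    exact hnorm.div_const s
  -- integrability of each term
  have hFcont : ∀ α : ℕ × ℕ, Continuous (F α) := by
    intro α
    rw [hF]
    fun_prop
  have hFint : ∀ α : ℕ × ℕ, Integrable (F α) (volume.restrict T) :=
    fun α => (hFcont α).integrableOn_Ioc
  -- constant integral over T
  have hvol : (volume T).toReal = 2*Real.pi := by
    rw [hT, Real.volume_Ioc, sub_zero, ENNReal.toReal_ofReal (by positivity)]
  have hconst : ∀ C : ℂ, ∫ _ in T, C = (2*Real.pi) • C := by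
    intro C
    rw [setIntegral_const, measureReal_def, hvol]
  -- integral of norms
  have hnormint : ∀ α : ℕ × ℕ,
      (∫ φ in T, ‖F α φ‖) = (2*Real.pi) * (‖c α‖ * s^α.1 * s^α.2 / s) := by
    intro α
    have : (fun φ => ‖F α φ‖) = fun _ : ℝ => ‖c α‖ * s^α.1 * s^α.2 / s := by
      funext φ
      exact term_norm s t φ hs0 (c α) α.1 α.2 _
    rw [this, setIntegral_const, measureReal_def, hvol, smul_eq_mul]
  have hSnint : Summable (fun α : ℕ × ℕ => ∫ φ in T, ‖F α φ‖) := by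
    have := hSn.mul_left (2*Real.pi)
    exact this.congr (fun α => (hnormint α).symm)
  -- swap sum and integral
  have hswap := integral_tsum_of_summable_integral_norm hFint hSnint
  have htsum : ∀ φ : ℝ, (∑' α : ℕ × ℕ, F α φ) = (h (z φ)).1 / (z φ).1 :=
    fun φ => (hFsum φ).tsum_eq
  -- integrals of individual terms
  have hIzero : ∀ α : ℕ × ℕ, ((((2*α.1 + α.2 : ℕ) : ℤ) - 2 : ℤ)) ≠ 0 →
      (∫ φ in T, F α φ) = 0 := by
    intro α hn
    rw [hT, ← intervalIntegral.integral_of_le (by positivity)]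
    have he : ∀ φ : ℝ, F α φ = ((c α * (s:ℂ)^α.1 * (s:ℂ)^α.2 / s) *
        Complex.exp ((α.2 : ℂ) * t * I)) *
        Complex.exp ((((2*α.1 + α.2 : ℕ) : ℤ) - 2 : ℤ) * φ * I) := by
      intro φ; rw [hF]; ring
    simp_rw [he]
    rw [intervalIntegral.integral_const_mul, aux_int _ hn, mul_zero]
  -- the only two surviving terms
  have hsum2 : (∑' α : ℕ × ℕ, ∫ φ in T, F α φ)
      = (∫ φ in T, F (1,0) φ) + (∫ φ in T, F (0,2) φ) := by
    rw [tsum_eq_sum (s := ({(1,0),(0,2)} : Finset (ℕ×ℕ)))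
      (by
        intro α hα
        apply hIzero
        rcases α with ⟨a, b⟩
        simp [Finset.mem_insert, Prod.ext_iff] at hα
        omega)]
    simp
  have hval1 : (∫ φ in T, F (1,0) φ) = (2*Real.pi) • (-1 : ℂ) := by
    have : ∀ φ : ℝ, F (1,0) φ = -1 := by
      intro φ
      rw [hF]
      norm_num [h10]
      field_simp
    simp_rw [this]
    exact hconst _
  have hval2 : (∫ φ in T, F (0,2) φ) = (2*Real.pi) • ((s:ℂ) * (c (0,2) * Complex.exp (2*t*I))) := by
    have : ∀ φ : ℝ, F (0,2) φ = (s:ℂ) * (c (0,2) * Complex.exp (2*t*I)) := by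
      intro φ
      rw [hF]
      norm_num
      field_simp
    simp_rw [this]
    exact hconst _
  -- total value of the integral
  have hvalue : (∫ φ in T, (h (z φ)).1 / (z φ).1)
      = (2*Real.pi) • (-1 : ℂ) + (2*Real.pi) • ((s:ℂ) * (c (0,2) * Complex.exp (2*t*I))) := by
    rw [← hval1, ← hval2, ← hsum2, hswap]
    congr 1
    funext φ
    exact (htsum φ).symm
  -- integrability of the full integrand
  have hzc : Continuous z := by rw [hz]; fun_prop
  have hhc : Continuous (fun φ : ℝ => h (z φ)) :=
    hM.1.continuousOn.comp_continuous hzc hmem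
  have hfc : Continuous (fun φ : ℝ => (h (z φ)).1 / (z φ).1) := by
    apply (continuous_fst.comp hhc).div (continuous_fst.comp hzc)
    exact fun φ => hne1 φ
  have hfint : Integrable (fun φ : ℝ => (h (z φ)).1 / (z φ).1) (volume.restrict T) :=
    hfc.integrableOn_Ioc
  -- nonpositivity of the real part
  have hptwise : ∀ φ : ℝ, ((h (z φ)).1 / (z φ).1).re ≤ 0 := by
    intro φ
    exact hM.2.2.2.1 (z φ) (hmem φ) (hne1 φ) (by rw [hz]; simp only; rw [habs1 φ, habs2 φ])
  have hint_nonpos : (∫ φ in T, ((h (z φ)).1 / (z φ).1).re) ≤ 0 := by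
    apply integral_nonpos
    intro φ
    exact hptwise φ
  have hre : (∫ φ in T, ((h (z φ)).1 / (z φ).1).re)
      = (∫ φ in T, (h (z φ)).1 / (z φ).1).re := by
    rw [← RCLike.re_eq_complex_re]
    exact integral_re hfint
  rw [hre, hvalue] at hint_nonpos
  simp only [Complex.add_re, Complex.real_smul, Complex.re_ofReal_mul, Complex.neg_re,
    Complex.one_re] at hint_nonpos
  nlinarith [hπ0, hint_nonpos]


/-- For `h = (h₁,h₂) ∈ M(D²)` with `h₁(z) = -z₁ + Σ_{|α|≥2} c_α z^α`, the coefficient of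
`z₂²` satisfies `|c_{(0,2)}| ≤ 1`. -/
theorem coeff_zero_two_le_one (h : ℂ × ℂ → ℂ × ℂ) (hM : memM2 h) (c : ℕ × ℕ → ℂ)
    (hc : ∀ z ∈ polydisc2, HasSum (fun α : ℕ × ℕ => c α * z.1 ^ α.1 * z.2 ^ α.2) ((h z).1))
    (h00 : c (0, 0) = 0) (h10 : c (1, 0) = -1) (h01 : c (0, 1) = 0) :
    ‖c (0, 2)‖ ≤ 1 := by
  set a := ‖c (0, 2)‖ with ha
  by_contra hlt
  push_neg at hlt
  have ha1 : (1:ℝ) < a := hlt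
  have ha0 : (0:ℝ) < a := lt_trans one_pos ha1
  set t : ℝ := -(Complex.arg (c (0, 2)))/2 with ht
  have hphase : c (0, 2) * Complex.exp (2*t*I) = (a:ℂ) := by
    have harg : (2:ℂ)*(t:ℝ)*I = -(((Complex.arg (c (0, 2))):ℂ) * I) := by
      rw [ht]
      push_cast
      ring
    conv_lhs => rw [← Complex.norm_mul_exp_arg_mul_I (c (0, 2))]
    rw [mul_assoc, harg, ← Complex.exp_add, add_neg_cancel, Complex.exp_zero, mul_one]
  set s : ℝ := (1 + 1/a)/2 with hs
  have hs0 : 0 < s := by positivity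
  have hs1 : s < 1 := by
    rw [hs]
    have : 1/a < 1 := by
      rw [div_lt_one ha0]; exact ha1
    linarith
  have hkey := key h hM c hc h10 s t hs0 hs1
  rw [hphase] at hkey
  simp only [Complex.ofReal_re] at hkey
  have hsa : s * a = (a + 1)/2 := by
    rw [hs]
    field_simp
  rw [hsa] at hkey
  linarith
end

section
/- Let (h₁,h₂,h₃) ∈ M(D³) with power series h₁(z) = -z₁ + Σ_{|α|≥2} c_α z^α. Then |c_{(0,1,1)}| ≤ 1, i.e. the coefficient of z₂z₃ in h₁ has modulus at most 1. -/
open Complex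

def polydisc3 : Set (ℂ × ℂ × ℂ) :=
  {z | ‖z.1‖ < 1 ∧ ‖z.2.1‖ < 1 ∧ ‖z.2.2‖ < 1}

/-- The class `M(D³)` of infinitesimal generators on the unit polydisc in `ℂ³`. -/
def memM3 (h : ℂ × ℂ × ℂ → ℂ × ℂ × ℂ) : Prop :=
  DifferentiableOn ℂ h polydisc3 ∧ h 0 = 0 ∧
    fderiv ℂ h 0 = -ContinuousLinearMap.id ℂ (ℂ × ℂ × ℂ) ∧
    (∀ z ∈ polydisc3, z.1 ≠ 0 → ‖z.2.1‖ ≤ ‖z.1‖ →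
      ‖z.2.2‖ ≤ ‖z.1‖ → ((h z).1 / z.1).re ≤ 0) ∧
    (∀ z ∈ polydisc3, z.2.1 ≠ 0 → ‖z.1‖ ≤ ‖z.2.1‖ →
      ‖z.2.2‖ ≤ ‖z.2.1‖ → ((h z).2.1 / z.2.1).re ≤ 0) ∧
    (∀ z ∈ polydisc3, z.2.2 ≠ 0 → ‖z.1‖ ≤ ‖z.2.2‖ →
      ‖z.2.1‖ ≤ ‖z.2.2‖ → ((h z).2.2 / z.2.2).re ≤ 0)

namespace CoeffAux

/-- `N`-th root of unity. -/
noncomputable def W (N : ℕ) : ℂ := Complex.exp (2 * Real.pi * Complex.I / N)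

/-- The first coordinate of the sample points. -/
noncomputable def Z (r : ℝ) (u : ℂ) (N a b : ℕ) : ℂ := (r : ℂ) * u * (W N ^ (a + b))⁻¹

/-- The sample points. -/
noncomputable def P (r : ℝ) (u : ℂ) (N a b : ℕ) : ℂ × ℂ × ℂ :=
  (Z r u N a b, W N ^ a * Z r u N a b, W N ^ b * Z r u N a b)

lemma Wne (N : ℕ) : W N ≠ 0 := Complex.exp_ne_zero _

lemma absW (N : ℕ) : ‖W N‖ = 1 := by
  have h : (2 * (Real.pi : ℂ) * Complex.I / N) = ((2 * Real.pi / N : ℝ) : ℂ) * Complex.I := by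
    push_cast; ring
  rw [W, h, Complex.norm_exp_ofReal_mul_I]

lemma Wprim {N : ℕ} (hN : N ≠ 0) : IsPrimitiveRoot (W N) N :=
  Complex.isPrimitiveRoot_exp N hN

lemma absZ {r : ℝ} (hr : 0 < r) (u : ℂ) (N a b : ℕ) :
    ‖Z r u N a b‖ = r * ‖u‖ := by
  simp [Z, norm_mul, norm_inv, norm_pow, absW, Complex.norm_real, abs_of_pos hr]

lemma Zne {r : ℝ} (hr : 0 < r) {u : ℂ} (hu : u ≠ 0) (N a b : ℕ) : Z r u N a b ≠ 0 := by
  apply mul_ne_zero (mul_ne_zero _ hu)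
  · exact inv_ne_zero (pow_ne_zero _ (Wne N))
  · exact_mod_cast hr.ne'

lemma geom_sum_root {x : ℂ} {N : ℕ} (hx : x ^ N = 1) :
    ∑ a ∈ Finset.range N, x ^ a = if x = 1 then (N : ℂ) else 0 := by
  split_ifs with h
  · simp [h]
  · rw [geom_sum_eq h, hx]
    simp

/-- The key character-sum evaluation. -/
lemma F_eval {r : ℝ} (hr : 0 < r) {u : ℂ} (hu : u ≠ 0) {N : ℕ} (d : ℂ)
    (α : ℕ × ℕ × ℕ) (hd0 : α = (0, 0, 0) → d = 0)
    (hN : α.1 + α.2.1 + α.2.2 + 2 ≤ N) :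
    (((N : ℝ)⁻¹ ^ 2 : ℝ) : ℂ) * ∑ p ∈ Finset.range N ×ˢ Finset.range N,
        d * Z r u N p.1 p.2 ^ α.1 * (W N ^ p.1 * Z r u N p.1 p.2) ^ α.2.1
          * (W N ^ p.2 * Z r u N p.1 p.2) ^ α.2.2 / Z r u N p.1 p.2
      = if α = (1, 0, 0) then d else if α = (0, 1, 1) then d * ((r : ℂ) * u) else 0 := by
  obtain ⟨A1, A2, A3⟩ := α
  simp only at hN hd0 ⊢
  rcases eq_or_ne (A1, A2, A3) ((0 : ℕ), (0 : ℕ), (0 : ℕ)) with h0 | h0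
  · rw [hd0 h0]
    simp [Prod.ext_iff] at h0
    simp [h0]
  have hNne : N ≠ 0 := by omega
  have hNC : (N : ℂ) ≠ 0 := Nat.cast_ne_zero.mpr hNne
  obtain ⟨n, hn⟩ : ∃ n, A1 + A2 + A3 = n + 1 := by
    refine ⟨A1 + A2 + A3 - 1, ?_⟩
    have : A1 + A2 + A3 ≠ 0 := by
      intro hs
      exact h0 (by simp [Prod.ext_iff]; omega)
    omega
  set v : ℂ := W N with hv
  have hWne : v ≠ 0 := Wne N
  set x : ℂ := v ^ A2 * (v ^ n)⁻¹ with hx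
  set y : ℂ := v ^ A3 * (v ^ n)⁻¹ with hy
  -- per-term evaluation
  have hterm : ∀ a b : ℕ,
      d * Z r u N a b ^ A1 * (v ^ a * Z r u N a b) ^ A2 * (v ^ b * Z r u N a b) ^ A3
          / Z r u N a b
        = d * ((r : ℂ) * u) ^ n * (x ^ a * y ^ b) := by
    intro a b
    have hZ : Z r u N a b ≠ 0 := Zne hr hu N a b
    have hZdef : Z r u N a b = (r : ℂ) * u * (v ^ (a + b))⁻¹ := rfl
    set Zc : ℂ := Z r u N a b with hZc
    calc d * Zc ^ A1 * (v ^ a * Zc) ^ A2 * (v ^ b * Zc) ^ A3 / Zc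
        = d * ((v ^ a) ^ A2 * (v ^ b) ^ A3) * (Zc ^ A1 * Zc ^ A2 * Zc ^ A3) / Zc := by
          rw [mul_pow, mul_pow]; ring
      _ = d * ((v ^ a) ^ A2 * (v ^ b) ^ A3) * Zc ^ (n + 1) / Zc := by
          rw [← pow_add, ← pow_add, hn]
      _ = d * ((v ^ a) ^ A2 * (v ^ b) ^ A3) * Zc ^ n := by
          rw [pow_succ, ← mul_assoc, mul_div_assoc, div_self hZ, mul_one]
      _ = d * ((r : ℂ) * u) ^ n * (x ^ a * y ^ b) := by
          rw [hx, hy, hZdef]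
          simp only [mul_pow, inv_pow, ← pow_mul]
          rw [show (a + b) * n = n * a + n * b by ring, pow_add, mul_inv]
          field_simp
          ring
  have hxN : ∀ m : ℕ, (v ^ m * (v ^ n)⁻¹) ^ N = 1 := by
    intro m
    have hWN : v ^ N = 1 := (Wprim hNne).pow_eq_one
    rw [mul_pow, inv_pow, ← pow_mul, ← pow_mul, mul_comm m N, mul_comm n N, pow_mul, pow_mul,
      hWN, one_pow, one_pow, inv_one, mul_one]
  have hsum : ∑ p ∈ Finset.range N ×ˢ Finset.range N,
        d * Z r u N p.1 p.2 ^ A1 * (v ^ p.1 * Z r u N p.1 p.2) ^ A2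
          * (v ^ p.2 * Z r u N p.1 p.2) ^ A3 / Z r u N p.1 p.2
      = d * ((r : ℂ) * u) ^ n
          * ((∑ a ∈ Finset.range N, x ^ a) * (∑ b ∈ Finset.range N, y ^ b)) := by
    rw [Finset.sum_product, Finset.sum_mul_sum, Finset.mul_sum]
    refine Finset.sum_congr rfl fun a _ => ?_
    rw [Finset.mul_sum]
    exact Finset.sum_congr rfl fun b _ => hterm a b
  rw [hsum]
  have hprinc : ∀ m : ℕ, m < N → n < N → (v ^ m * (v ^ n)⁻¹ = 1 ↔ m = n) := by
    intro m hm hnN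
    rw [mul_inv_eq_one₀ (pow_ne_zero _ hWne)]
    constructor
    · exact fun he => (Wprim hNne).pow_inj hm hnN he
    · rintro rfl; rfl
  have hA2lt : A2 < N := by omega
  have hA3lt : A3 < N := by omega
  have hnlt : n < N := by omega
  by_cases hxy : x = 1 ∧ y = 1
  · obtain ⟨hx1, hy1⟩ := hxy
    have hA2 : A2 = n := (hprinc A2 hA2lt hnlt).mp hx1
    have hA3 : A3 = n := (hprinc A3 hA3lt hnlt).mp hy1
    have h1 : A1 + n = 1 := by omega
    rw [geom_sum_root (hxN A2), geom_sum_root (hxN A3), if_pos hx1, if_pos hy1]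
    have hK : (((N : ℝ)⁻¹ ^ 2 : ℝ) : ℂ) * ((N : ℂ) * (N : ℂ)) = 1 := by
      push_cast
      field_simp
    rcases (by omega : n = 0 ∧ A1 = 1 ∨ n = 1 ∧ A1 = 0) with ⟨rfl, rfl⟩ | ⟨rfl, rfl⟩
    · have hA2' : A2 = 0 := hA2
      have hA3' : A3 = 0 := hA3
      subst hA2' hA3'
      rw [if_pos rfl, pow_zero, mul_one, mul_comm d, ← mul_assoc, hK, one_mul]
    · have hA2' : A2 = 1 := hA2
      have hA3' : A3 = 1 := hA3
      subst hA2' hA3'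
      rw [if_neg (by decide), if_pos rfl, pow_one, mul_comm (d * ((r : ℂ) * u)), ← mul_assoc,
        hK, one_mul]
  · have hzero : (∑ a ∈ Finset.range N, x ^ a) * (∑ b ∈ Finset.range N, y ^ b) = 0 := by
      rcases not_and_or.mp hxy with hne | hne
      · rw [geom_sum_root (hxN A2), if_neg hne, zero_mul]
      · rw [geom_sum_root (hxN A3), if_neg hne, mul_zero]
    have hne1 : (A1, A2, A3) ≠ ((1 : ℕ), (0 : ℕ), (0 : ℕ)) := by
      rintro he
      simp [Prod.ext_iff] at he
      obtain ⟨e1, e2, e3⟩ := he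
      subst e1; subst e2; subst e3
      have hn0 : n = 0 := by omega
      subst hn0
      exact hxy ⟨by rw [hx]; exact mul_inv_cancel₀ (pow_ne_zero _ hWne), by rw [hy]; exact mul_inv_cancel₀ (pow_ne_zero _ hWne)⟩
    have hne2 : (A1, A2, A3) ≠ ((0 : ℕ), (1 : ℕ), (1 : ℕ)) := by
      rintro he
      simp [Prod.ext_iff] at he
      obtain ⟨e1, e2, e3⟩ := he
      subst e1; subst e2; subst e3
      have hn1 : n = 1 := by omega
      subst hn1
      exact hxy ⟨by rw [hx]; exact mul_inv_cancel₀ (pow_ne_zero _ hWne), by rw [hy]; exact mul_inv_cancel₀ (pow_ne_zero _ hWne)⟩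
    rw [hzero, mul_zero, mul_zero, if_neg hne1, if_neg hne2]

end CoeffAux

open CoeffAux Filter Topology

/-- For `h = (h₁,h₂,h₃) ∈ M(D³)` with `h₁(z) = -z₁ + Σ_{|α|≥2} c_α z^α`, the coefficient of
`z₂z₃` satisfies `|c_{(0,1,1)}| ≤ 1`. -/
theorem coeff_zero_one_one_le_one (h : ℂ × ℂ × ℂ → ℂ × ℂ × ℂ) (hM : memM3 h)
    (c : ℕ × ℕ × ℕ → ℂ)
    (hc : ∀ z ∈ polydisc3,
      HasSum (fun α : ℕ × ℕ × ℕ => c α * z.1 ^ α.1 * z.2.1 ^ α.2.1 * z.2.2 ^ α.2.2) ((h z).1))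
    (h000 : c (0, 0, 0) = 0) (h100 : c (1, 0, 0) = -1)
    (h010 : c (0, 1, 0) = 0) (h001 : c (0, 0, 1) = 0) :
    ‖c (0, 1, 1)‖ ≤ 1 := by
  by_cases hzero : c (0, 1, 1) = 0
  · rw [hzero]
    simp
  set A : ℝ := ‖c (0, 1, 1)‖ with hA
  have hApos : 0 < A := (norm_pos_iff.mpr hzero)
  have hAc : (‖c (0, 1, 1)‖ : ℂ) = (A : ℂ) := by rw [← hA]
  clear_value A
  suffices H : ∀ r : ℝ, 0 < r → r < 1 → r * A ≤ 1 by
    by_contra hcon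
    push_neg at hcon
    have h1A : 1 < A := hcon
    have hr0 : 0 < (1 + A) / (2 * A) := by positivity
    have hr1 : (1 + A) / (2 * A) < 1 := by
      rw [div_lt_one (by positivity)]; linarith
    have hle := H _ hr0 hr1
    have he : (1 + A) / (2 * A) * A = (1 + A) / 2 := by
      field_simp
    rw [he] at hle
    linarith
  intro r hr0 hr1
  have hAne : (A : ℂ) ≠ 0 := by exact_mod_cast hApos.ne'
  obtain ⟨u, hune, habsu, hcu⟩ : ∃ u : ℂ, u ≠ 0 ∧ ‖u‖ = 1 ∧
      c (0, 1, 1) * u = (A : ℂ) := by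
    refine ⟨(starRingEnd ℂ) (c (0, 1, 1)) / (A : ℂ), ?_, ?_, ?_⟩
    · apply div_ne_zero _ hAne
      simpa using hzero
    · rw [norm_div, Complex.norm_conj, Complex.norm_real, Real.norm_eq_abs, abs_of_pos hApos, ← hA,
        div_self hApos.ne']
    · rw [mul_div_assoc', Complex.mul_conj, Complex.normSq_eq_norm_sq, hA]
      push_cast
      rw [sq]
      field_simp
  -- membership of sample points in the polydisc
  have habsZ : ∀ N a b : ℕ, ‖Z r u N a b‖ = r := by
    intro N a b; rw [absZ hr0, habsu, mul_one]
  have habs2 : ∀ N k a b : ℕ, ‖W N ^ k * Z r u N a b‖ = r := by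
    intro N k a b
    rw [norm_mul, norm_pow, absW, one_pow, one_mul, habsZ]
  have hmem : ∀ N a b : ℕ, P r u N a b ∈ polydisc3 := by
    intro N a b
    simp only [polydisc3, P, Set.mem_setOf_eq]
    refine ⟨?_, ?_, ?_⟩
    · rw [habsZ]; exact hr1
    · rw [habs2]; exact hr1
    · rw [habs2]; exact hr1
  -- each average is the sum of the corresponding series
  have hHS : ∀ N : ℕ, HasSum
      (fun α : ℕ × ℕ × ℕ => (((N : ℝ)⁻¹ ^ 2 : ℝ) : ℂ) * ∑ p ∈ Finset.range N ×ˢ Finset.range N,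
        c α * Z r u N p.1 p.2 ^ α.1 * (W N ^ p.1 * Z r u N p.1 p.2) ^ α.2.1
          * (W N ^ p.2 * Z r u N p.1 p.2) ^ α.2.2 / Z r u N p.1 p.2)
      ((((N : ℝ)⁻¹ ^ 2 : ℝ) : ℂ) * ∑ p ∈ Finset.range N ×ˢ Finset.range N,
        (h (P r u N p.1 p.2)).1 / Z r u N p.1 p.2) := by
    intro N
    refine HasSum.mul_left _ ?_
    have h1 : ∀ p ∈ Finset.range N ×ˢ Finset.range N, HasSum
        (fun α : ℕ × ℕ × ℕ =>
          c α * Z r u N p.1 p.2 ^ α.1 * (W N ^ p.1 * Z r u N p.1 p.2) ^ α.2.1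
            * (W N ^ p.2 * Z r u N p.1 p.2) ^ α.2.2 / Z r u N p.1 p.2)
        ((h (P r u N p.1 p.2)).1 / Z r u N p.1 p.2) := by
      intro p _
      have h2 := (hc (P r u N p.1 p.2) (hmem N p.1 p.2)).div_const (Z r u N p.1 p.2)
      simp only [P] at h2
      exact h2
    exact hasSum_sum h1
  -- the dominating function
  have hrne : r ≠ 0 := hr0.ne'
  have hmemr : ((r : ℂ), (r : ℂ), (r : ℂ)) ∈ polydisc3 := by
    refine ⟨?_, ?_, ?_⟩ <;>
      simpa [Complex.norm_real, abs_of_pos hr0] using hr1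
  have hgsum : Summable (fun α : ℕ × ℕ × ℕ =>
      ‖c α * (r : ℂ) ^ α.1 * (r : ℂ) ^ α.2.1 * (r : ℂ) ^ α.2.2‖ * r⁻¹) :=
    (summable_norm_iff.mpr (hc _ hmemr).summable).mul_right r⁻¹
  -- the limit function
  set L : ℕ × ℕ × ℕ → ℂ := fun α =>
    if α = (1, 0, 0) then c α else if α = (0, 1, 1) then c α * ((r : ℂ) * u) else 0 with hL
  have hLsum : HasSum L (-1 + ((r : ℝ) : ℂ) * (A : ℂ)) := by
    have hs : HasSum L (∑ α ∈ ({(1, 0, 0), (0, 1, 1)} : Finset (ℕ × ℕ × ℕ)), L α) := by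
      refine hasSum_sum_of_ne_finset_zero ?_
      intro b hb
      simp only [Finset.mem_insert, Finset.mem_singleton] at hb
      push_neg at hb
      rw [hL]
      simp only [if_neg hb.1, if_neg hb.2]
    have hval : (∑ α ∈ ({(1, 0, 0), (0, 1, 1)} : Finset (ℕ × ℕ × ℕ)), L α)
        = -1 + ((r : ℝ) : ℂ) * (A : ℂ) := by
      rw [Finset.sum_insert (by decide), Finset.sum_singleton, hL]
      simp only [if_pos rfl, if_neg (by decide : ((0, 1, 1) : ℕ × ℕ × ℕ) ≠ (1, 0, 0))]
      rw [h100]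
      have : c (0, 1, 1) * ((r : ℂ) * u) = ((r : ℝ) : ℂ) * (A : ℂ) := by
        rw [mul_comm ((r : ℂ)) u, ← mul_assoc, hcu]; ring
      rw [this]
      norm_num
    rwa [hval] at hs
  -- pointwise convergence
  have hlim : ∀ α : ℕ × ℕ × ℕ, Tendsto
      (fun N : ℕ => (((N : ℝ)⁻¹ ^ 2 : ℝ) : ℂ) * ∑ p ∈ Finset.range N ×ˢ Finset.range N,
        c α * Z r u N p.1 p.2 ^ α.1 * (W N ^ p.1 * Z r u N p.1 p.2) ^ α.2.1
          * (W N ^ p.2 * Z r u N p.1 p.2) ^ α.2.2 / Z r u N p.1 p.2)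
      atTop (𝓝 (L α)) := by
    intro α
    refine Tendsto.congr' ?_ tendsto_const_nhds
    rw [Filter.EventuallyEq, eventually_atTop]
    refine ⟨α.1 + α.2.1 + α.2.2 + 2, fun N hN => ?_⟩
    rw [hL]
    exact (F_eval hr0 hune (c α) α (fun h0 => by rw [h0]; exact h000) hN).symm
  -- domination
  have hbound : ∀ (N : ℕ) (α : ℕ × ℕ × ℕ),
      ‖(((N : ℝ)⁻¹ ^ 2 : ℝ) : ℂ) * ∑ p ∈ Finset.range N ×ˢ Finset.range N,
        c α * Z r u N p.1 p.2 ^ α.1 * (W N ^ p.1 * Z r u N p.1 p.2) ^ α.2.1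
          * (W N ^ p.2 * Z r u N p.1 p.2) ^ α.2.2 / Z r u N p.1 p.2‖
        ≤ ‖c α * (r : ℂ) ^ α.1 * (r : ℂ) ^ α.2.1 * (r : ℂ) ^ α.2.2‖ * r⁻¹ := by
    intro N α
    have hgα : ‖c α * (r : ℂ) ^ α.1 * (r : ℂ) ^ α.2.1 * (r : ℂ) ^ α.2.2‖ * r⁻¹
        = ‖c α‖ * r ^ α.1 * r ^ α.2.1 * r ^ α.2.2 * r⁻¹ := by
      simp [norm_mul, norm_pow, Complex.norm_real, abs_of_pos hr0]
    have hterm : ∀ p : ℕ × ℕ, ‖c α * Z r u N p.1 p.2 ^ α.1 * (W N ^ p.1 * Z r u N p.1 p.2) ^ α.2.1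
          * (W N ^ p.2 * Z r u N p.1 p.2) ^ α.2.2 / Z r u N p.1 p.2‖
        = ‖c α‖ * r ^ α.1 * r ^ α.2.1 * r ^ α.2.2 * r⁻¹ := by
      intro p
      rw [norm_div, norm_mul, norm_mul, norm_mul, norm_pow, norm_pow, norm_pow]
      rw [habsZ, habs2, habs2, div_eq_mul_inv]
    rw [hgα, norm_mul]
    have h1 : ‖(((N : ℝ)⁻¹ ^ 2 : ℝ) : ℂ)‖ = (N : ℝ)⁻¹ ^ 2 := by
      rw [Complex.norm_real, Real.norm_eq_abs, _root_.abs_of_nonneg (by positivity)]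
    rw [h1]
    have h2 : ‖∑ p ∈ Finset.range N ×ˢ Finset.range N,
        c α * Z r u N p.1 p.2 ^ α.1 * (W N ^ p.1 * Z r u N p.1 p.2) ^ α.2.1
          * (W N ^ p.2 * Z r u N p.1 p.2) ^ α.2.2 / Z r u N p.1 p.2‖
        ≤ (N : ℝ) ^ 2 * (‖c α‖ * r ^ α.1 * r ^ α.2.1 * r ^ α.2.2 * r⁻¹) := by
      refine (norm_sum_le _ _).trans ?_
      rw [Finset.sum_congr rfl (fun p _ => hterm p), Finset.sum_const, Finset.card_product,
        Finset.card_range, nsmul_eq_mul]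
      push_cast
      rw [sq]
    calc (N : ℝ)⁻¹ ^ 2 * ‖∑ p ∈ Finset.range N ×ˢ Finset.range N,
        c α * Z r u N p.1 p.2 ^ α.1 * (W N ^ p.1 * Z r u N p.1 p.2) ^ α.2.1
          * (W N ^ p.2 * Z r u N p.1 p.2) ^ α.2.2 / Z r u N p.1 p.2‖
        ≤ (N : ℝ)⁻¹ ^ 2 * ((N : ℝ) ^ 2 *
            (‖c α‖ * r ^ α.1 * r ^ α.2.1 * r ^ α.2.2 * r⁻¹)) := by
          exact mul_le_mul_of_nonneg_left h2 (by positivity)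
      _ ≤ ‖c α‖ * r ^ α.1 * r ^ α.2.1 * r ^ α.2.2 * r⁻¹ := by
          rcases Nat.eq_zero_or_pos N with hN0 | hNpos
          · subst hN0
            simp only [Nat.cast_zero, inv_zero]
            rw [zero_pow (by norm_num), zero_mul]
            positivity
          · have hNne : (N : ℝ) ≠ 0 := Nat.cast_ne_zero.mpr hNpos.ne'
            exact le_of_eq (by field_simp)
  -- pass to the limit
  have key : Tendsto
      (fun N : ℕ => (((N : ℝ)⁻¹ ^ 2 : ℝ) : ℂ) * ∑ p ∈ Finset.range N ×ˢ Finset.range N,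
        (h (P r u N p.1 p.2)).1 / Z r u N p.1 p.2)
      atTop (𝓝 (-1 + ((r : ℝ) : ℂ) * (A : ℂ))) := by
    have hmain := tendsto_tsum_of_dominated_convergence
      (f := fun (N : ℕ) (α : ℕ × ℕ × ℕ) =>
        (((N : ℝ)⁻¹ ^ 2 : ℝ) : ℂ) * ∑ p ∈ Finset.range N ×ˢ Finset.range N,
          c α * Z r u N p.1 p.2 ^ α.1 * (W N ^ p.1 * Z r u N p.1 p.2) ^ α.2.1
            * (W N ^ p.2 * Z r u N p.1 p.2) ^ α.2.2 / Z r u N p.1 p.2)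
      (g := L)
      (bound := fun α : ℕ × ℕ × ℕ =>
        ‖c α * (r : ℂ) ^ α.1 * (r : ℂ) ^ α.2.1 * (r : ℂ) ^ α.2.2‖ * r⁻¹)
      hgsum hlim (Filter.Eventually.of_forall hbound)
    rw [hLsum.tsum_eq] at hmain
    exact hmain.congr fun N => (hHS N).tsum_eq
  -- nonpositivity of the real parts
  have hre_le : ∀ N : ℕ,
      ((((N : ℝ)⁻¹ ^ 2 : ℝ) : ℂ) * ∑ p ∈ Finset.range N ×ˢ Finset.range N,
        (h (P r u N p.1 p.2)).1 / Z r u N p.1 p.2).re ≤ 0 := by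
    intro N
    rw [Complex.re_ofReal_mul]
    have h2 : (∑ p ∈ Finset.range N ×ˢ Finset.range N,
        (h (P r u N p.1 p.2)).1 / Z r u N p.1 p.2).re ≤ 0 := by
      rw [Complex.re_sum]
      refine Finset.sum_nonpos fun p _ => ?_
      have := hM.2.2.2.1 (P r u N p.1 p.2) (hmem N p.1 p.2)
        (Zne hr0 hune N p.1 p.2)
        (le_of_eq (by rw [show (P r u N p.1 p.2).2.1 = W N ^ p.1 * Z r u N p.1 p.2 from rfl,
          show (P r u N p.1 p.2).1 = Z r u N p.1 p.2 from rfl, habs2, habsZ]))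
        (le_of_eq (by rw [show (P r u N p.1 p.2).2.2 = W N ^ p.2 * Z r u N p.1 p.2 from rfl,
          show (P r u N p.1 p.2).1 = Z r u N p.1 p.2 from rfl, habs2, habsZ]))
      exact this
    calc (N : ℝ)⁻¹ ^ 2 * (∑ p ∈ Finset.range N ×ˢ Finset.range N,
          (h (P r u N p.1 p.2)).1 / Z r u N p.1 p.2).re
        ≤ (N : ℝ)⁻¹ ^ 2 * 0 := mul_le_mul_of_nonneg_left h2 (by positivity)
      _ = 0 := mul_zero _
  have hfinal : (-1 + ((r : ℝ) : ℂ) * (A : ℂ)).re ≤ 0 :=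
    le_of_tendsto ((Complex.continuous_re.tendsto _).comp key)
      (Filter.Eventually.of_forall hre_le)
  have : (-1 + ((r : ℝ) : ℂ) * (A : ℂ)).re = -1 + r * A := by
    rw [Complex.add_re, ← Complex.ofReal_mul, Complex.ofReal_re]
    norm_num
  rw [this] at hfinal
  linarith
end

section
/- Let (h₁,h₂) ∈ M(D²) with h₁(z) = -z₁ + Σ_{|α|≥2} c_α z^α. Then the map z₂ ↦ 1 - Σ_{n≥1} c_{(1,n)} z₂ⁿ is a holomorphic function on D with value 1 at 0 and nonnegative real part; consequently the map (z₁,z₂) ↦ ( -z₁(1 - Σ_{n≥1} c_{(1,n)} z₂ⁿ), h₂(z₁,z₂) ) also belongs to M(D²). -/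
open Complex MeasureTheory Real

lemma isOpen_polydisc2 : IsOpen polydisc2 := by
  have : polydisc2 = {z : ℂ × ℂ | ‖z.1‖ < 1} ∩ {z | ‖z.2‖ < 1} := by
    ext z; simp [polydisc2]
  rw [this]
  exact (isOpen_lt continuous_fst.norm continuous_const).inter
    (isOpen_lt continuous_snd.norm continuous_const)

section Pieces

variable (h : ℂ × ℂ → ℂ × ℂ) (c : ℕ × ℕ → ℂ)
    (hc : ∀ z ∈ polydisc2, HasSum (fun α : ℕ × ℕ => c α * z.1 ^ α.1 * z.2 ^ α.2) ((h z).1))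

include hc in
lemma row_summable {w : ℂ} (hw : ‖w‖ < 1) :
    Summable (fun n : ℕ => c (1, n) * w ^ n) := by
  have h2 : ((2⁻¹ : ℂ), w) ∈ polydisc2 := by
    refine ⟨?_, hw⟩
    rw [norm_inv]; norm_num
  have hs := (hc _ h2).summable.comp_injective
    (i := fun n : ℕ => ((1 : ℕ), n)) (fun a b hab => by simpa using hab)
  refine (hs.mul_left 2).congr fun n => ?_
  show (2 : ℂ) * (c (1, n) * 2⁻¹ ^ 1 * w ^ n) = _
  ring

include hc in
lemma row_summable' {w : ℂ} (hw : ‖w‖ < 1) :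
    Summable (fun n : ℕ => c (1, n + 1) * w ^ (n + 1)) :=
  (row_summable h c hc hw).comp_injective (add_left_injective 1)

include hc in
lemma re_row_nonpos (hM : memM2 h) {w : ℂ} (hw : ‖w‖ < 1) :
    (∑' n : ℕ, c (1, n) * w ^ n).re ≤ 0 := by
  set r : ℝ := (‖w‖ + 1) / 2 with hrdef
  have habs : 0 ≤ ‖w‖ := (norm_nonneg w)
  have hr0 : 0 < r := by positivity
  have hr1 : r < 1 := by rw [hrdef]; linarith
  have hwr : ‖w‖ ≤ r := by rw [hrdef]; linarith
  have habsr : ∀ θ : ℝ, ‖(r:ℂ) * Complex.exp (θ * Complex.I)‖ = r := by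
    intro θ; simp [map_mul, Complex.norm_exp, abs_of_pos hr0]
  have hmem : ∀ θ : ℝ, ((r:ℂ) * Complex.exp (θ * Complex.I), w) ∈ polydisc2 := by
    intro θ; exact ⟨by rw [habsr]; exact hr1, hw⟩
  set F : ℕ × ℕ → ℝ → ℂ := fun α θ =>
    c α * ((r:ℂ) * Complex.exp (θ * Complex.I)) ^ α.1 * w ^ α.2 * Complex.exp (-(θ * Complex.I))
    with hFdef
  have hFcont : ∀ α, Continuous (F α) := by
    intro α
    fun_prop
  have hFnorm : ∀ α θ, ‖F α θ‖ = ‖c α‖ * r ^ α.1 * (‖w‖) ^ α.2 := by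
    intro α θ
    simp [hFdef, map_mul, map_pow, Complex.norm_exp, abs_of_pos hr0]
  have hFint : ∀ α, Integrable (F α) (volume.restrict (Set.Ioc (0:ℝ) (2*π))) := fun α =>
    (hFcont α).integrableOn_Ioc
  have hnormsum : Summable (fun α : ℕ × ℕ => ‖c α‖ * r ^ α.1 * (‖w‖) ^ α.2) := by
    have h2 : ((r : ℂ), w) ∈ polydisc2 :=
      ⟨by simpa [Complex.norm_real, abs_of_pos hr0] using hr1, hw⟩
    refine (summable_norm_iff.mpr (hc _ h2).summable).congr fun α => ?_
    simp [map_mul, map_pow, Complex.norm_real, abs_of_pos hr0]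
  have hIntNorm : Summable fun α : ℕ × ℕ =>
      ∫ θ, ‖F α θ‖ ∂(volume.restrict (Set.Ioc (0:ℝ) (2*π))) := by
    refine (hnormsum.mul_left (2*π)).congr fun α => ?_
    rw [show (fun θ => ‖F α θ‖) = fun _ => ‖c α‖ * r ^ α.1 * (‖w‖) ^ α.2 from
      funext (hFnorm α)]
    rw [integral_const]
    simp [Real.volume_Ioc, ENNReal.toReal_ofReal (by positivity : (0:ℝ) ≤ 2*π), Real.pi_pos.le]
  have hswap := integral_tsum_of_summable_integral_norm hFint hIntNorm
  have htsumF : ∀ θ : ℝ, ∑' α : ℕ × ℕ, F α θ =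
      (h ((r:ℂ) * Complex.exp (θ * Complex.I), w)).1 * Complex.exp (-(θ * Complex.I)) := by
    intro θ
    exact ((hc _ (hmem θ)).mul_right _).tsum_eq
  have hJ : ∀ α : ℕ × ℕ, (∫ θ, F α θ ∂(volume.restrict (Set.Ioc (0:ℝ) (2*π))))
      = if α.1 = 1 then ((2*π*r : ℝ):ℂ) * (c α * w ^ α.2) else 0 := by
    intro α
    rw [show (∫ θ, F α θ ∂(volume.restrict (Set.Ioc (0:ℝ) (2*π))))
        = ∫ θ in Set.Ioc (0:ℝ) (2*π), F α θ from rfl]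
    rw [← intervalIntegral.integral_of_le (by positivity : (0:ℝ) ≤ 2*π)]
    have hpt : ∀ θ : ℝ, F α θ
        = (c α * (r:ℂ) ^ α.1 * w ^ α.2) * Complex.exp ((((α.1:ℂ) - 1) * Complex.I) * θ) := by
      intro θ
      rw [hFdef]
      simp only []
      rw [mul_pow, ← Complex.exp_nat_mul,
        show (((α.1:ℂ) - 1) * Complex.I) * θ
          = (α.1:ℂ) * ((θ:ℂ) * Complex.I) + -((θ:ℂ) * Complex.I) by ring,
        Complex.exp_add]
      ring
    simp_rw [hpt]
    rw [intervalIntegral.integral_const_mul]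
    by_cases h1 : α.1 = 1
    · rw [if_pos h1, h1]
      norm_num
      ring
    · have hcc : ((α.1:ℂ) - 1) * Complex.I ≠ 0 := by
        refine mul_ne_zero (sub_ne_zero.mpr ?_) Complex.I_ne_zero
        exact_mod_cast h1
      rw [integral_exp_mul_complex hcc]
      rw [show (((α.1:ℂ) - 1) * Complex.I) * ((2:ℝ)*π : ℝ)
          = ((α.1:ℤ) - 1 : ℤ) * (2*(π:ℂ)*Complex.I) by push_cast; ring]
      rw [Complex.exp_int_mul_two_pi_mul_I]
      simp [h1]
  -- compute the tsum of the integrals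
  have hLHS : (∑' α : ℕ × ℕ, ∫ θ, F α θ ∂(volume.restrict (Set.Ioc (0:ℝ) (2*π))))
      = ((2*π*r : ℝ):ℂ) * ∑' n : ℕ, c (1, n) * w ^ n := by
    rw [tsum_congr hJ]
    have hinj : Function.Injective (fun n : ℕ => ((1:ℕ), n)) := fun a b hab => by simpa using hab
    rw [← Function.Injective.tsum_eq hinj (f := fun α : ℕ × ℕ =>
        if α.1 = 1 then ((2*π*r : ℝ):ℂ) * (c α * w ^ α.2) else 0) ?_]
    · simp only [if_pos rfl]
      exact tsum_mul_left
    · intro α hα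
      rcases α with ⟨m, n⟩
      by_contra hr
      simp only [Set.mem_range, not_exists] at hr
      have hm : m = 1 := by
        by_contra hm
        exact hα (by simp [hm])
      exact hr n (by simp [hm])
  -- continuity/integrability of the full integrand
  have hpcont : Continuous fun θ : ℝ => ((r:ℂ) * Complex.exp (θ * Complex.I), w) := by fun_prop
  have hGcont : Continuous fun θ : ℝ =>
      (h ((r:ℂ) * Complex.exp (θ * Complex.I), w)).1 * Complex.exp (-(θ * Complex.I)) := by
    have hhc : Continuous fun θ : ℝ => h ((r:ℂ) * Complex.exp (θ * Complex.I), w) :=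
      hM.1.continuousOn.comp_continuous hpcont hmem
    exact (continuous_fst.comp hhc).mul (by fun_prop)
  have hGint : Integrable (fun θ : ℝ =>
      (h ((r:ℂ) * Complex.exp (θ * Complex.I), w)).1 * Complex.exp (-(θ * Complex.I)))
      (volume.restrict (Set.Ioc (0:ℝ) (2*π))) := hGcont.integrableOn_Ioc
  -- pointwise nonpositivity of the real part
  have hptwise : ∀ θ : ℝ,
      ((h ((r:ℂ) * Complex.exp (θ * Complex.I), w)).1 * Complex.exp (-(θ * Complex.I))).re ≤ 0 := by
    intro θ
    have hne : (r:ℂ) * Complex.exp (θ * Complex.I) ≠ 0 := by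
      intro h0
      have := habsr θ
      rw [h0] at this
      simp at this
      exact hr0.ne' this.symm
    have h1 := hM.2.2.2.1 _ (hmem θ) hne (by rw [habsr]; exact hwr)
    have heq : (h ((r:ℂ) * Complex.exp (θ * Complex.I), w)).1 * Complex.exp (-(θ * Complex.I))
        = (r:ℂ) * ((h ((r:ℂ) * Complex.exp (θ * Complex.I), w)).1
            / ((r:ℂ) * Complex.exp (θ * Complex.I))) := by
      have hrne : (r:ℂ) ≠ 0 := Complex.ofReal_ne_zero.mpr hr0.ne'
      rw [div_eq_mul_inv, mul_inv, ← Complex.exp_neg]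
      field_simp
    rw [heq, Complex.re_ofReal_mul]
    exact mul_nonpos_of_nonneg_of_nonpos hr0.le h1
  -- put it together
  have hint_re : (∫ θ, (h ((r:ℂ) * Complex.exp (θ * Complex.I), w)).1
      * Complex.exp (-(θ * Complex.I)) ∂(volume.restrict (Set.Ioc (0:ℝ) (2*π)))).re ≤ 0 := by
    have h2 := integral_re hGint
    simp only [RCLike.re_to_complex] at h2
    rw [← h2]
    exact integral_nonpos fun θ => hptwise θ
  have hfinal : ((2*π*r : ℝ):ℂ) * (∑' n : ℕ, c (1, n) * w ^ n)
      = ∫ θ, (h ((r:ℂ) * Complex.exp (θ * Complex.I), w)).1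
          * Complex.exp (-(θ * Complex.I)) ∂(volume.restrict (Set.Ioc (0:ℝ) (2*π))) := by
    rw [← hLHS, hswap]
    exact integral_congr_ae (Filter.Eventually.of_forall htsumF)
  have h0 : (((2*π*r : ℝ):ℂ) * (∑' n : ℕ, c (1, n) * w ^ n)).re ≤ 0 := by
    rw [hfinal]; exact hint_re
  rw [Complex.re_ofReal_mul] at h0
  have hpr : 0 < 2*π*r := by positivity
  by_contra hS
  push_neg at hS
  nlinarith [mul_pos hpr hS]

include hc in
lemma qdiff : DifferentiableOn ℂ (fun w : ℂ => 1 - ∑' n : ℕ, c (1, n + 1) * w ^ (n + 1))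
    (Metric.ball (0 : ℂ) 1) := by
  refine (differentiableOn_const 1).sub ?_
  intro w₀ hw₀
  rw [Metric.mem_ball, dist_zero_right] at hw₀
  set r : ℝ := (‖w₀‖ + 1) / 2 with hrdef
  have habs : 0 ≤ ‖w₀‖ := norm_nonneg w₀
  have hr0 : 0 < r := by positivity
  have hr1 : r < 1 := by rw [hrdef]; linarith
  have hwr : ‖w₀‖ < r := by rw [hrdef]; linarith
  have hsum : Summable (fun n : ℕ => ‖c (1, n + 1)‖ * r ^ (n + 1)) := by
    have hr' : ‖(r : ℂ)‖ < 1 := by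
      simpa [Complex.norm_real, abs_of_pos hr0] using hr1
    refine (summable_norm_iff.mpr (row_summable' h c hc hr')).congr fun n => ?_
    simp [map_mul, map_pow, Complex.norm_real, abs_of_pos hr0]
  have hdOn : DifferentiableOn ℂ (fun w : ℂ => ∑' n : ℕ, c (1, n + 1) * w ^ (n + 1))
      (Metric.ball (0 : ℂ) r) := by
    refine differentiableOn_tsum_of_summable_norm hsum
      (fun n => ((differentiable_const _).mul (differentiable_pow _)).differentiableOn)
      Metric.isOpen_ball (fun n x hx => ?_)
    rw [Metric.mem_ball, dist_zero_right] at hx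
    rw [norm_mul, norm_pow]
    exact mul_le_mul_of_nonneg_left
      (pow_le_pow_left₀ (norm_nonneg x) hx.le _) (norm_nonneg _)
  exact (hdOn.differentiableAt (Metric.isOpen_ball.mem_nhds
    (by rwa [Metric.mem_ball, dist_zero_right]))).differentiableWithinAt

end Pieces

/-- Shearing: for `h = (h₁,h₂) ∈ M(D²)` with `h₁(z) = -z₁ + Σ_{|α|≥2} c_α z^α`, the map
`q(w) = 1 - Σ_{n≥1} c_{(1,n)} wⁿ` is holomorphic on `D`, `q(0)=1`, `Re q ≥ 0`, and
`(z₁,z₂) ↦ (-z₁ q(z₂), h₂(z))` again belongs to `M(D²)`. -/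
theorem shearing_linear_part (h : ℂ × ℂ → ℂ × ℂ) (hM : memM2 h) (c : ℕ × ℕ → ℂ)
    (hc : ∀ z ∈ polydisc2, HasSum (fun α : ℕ × ℕ => c α * z.1 ^ α.1 * z.2 ^ α.2) ((h z).1))
    (h00 : c (0, 0) = 0) (h10 : c (1, 0) = -1) (h01 : c (0, 1) = 0) :
    (∀ w : ℂ, ‖w‖ < 1 →
      HasSum (fun n : ℕ => c (1, n + 1) * w ^ (n + 1))
        (1 - (1 - ∑' n : ℕ, c (1, n + 1) * w ^ (n + 1)))) ∧
    DifferentiableOn ℂ (fun w : ℂ => 1 - ∑' n : ℕ, c (1, n + 1) * w ^ (n + 1))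
      (Metric.ball (0 : ℂ) 1) ∧
    (1 - ∑' n : ℕ, c (1, n + 1) * (0 : ℂ) ^ (n + 1)) = 1 ∧
    (∀ w : ℂ, ‖w‖ < 1 → 0 ≤ ((1 : ℂ) - ∑' n : ℕ, c (1, n + 1) * w ^ (n + 1)).re) ∧
    memM2 (fun z : ℂ × ℂ =>
      (-z.1 * (1 - ∑' n : ℕ, c (1, n + 1) * z.2 ^ (n + 1)), (h z).2)) := by
  have q0 : (1 - ∑' n : ℕ, c (1, n + 1) * (0 : ℂ) ^ (n + 1)) = 1 := by simp
  have hpos : ∀ w : ℂ, ‖w‖ < 1 →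
      0 ≤ ((1 : ℂ) - ∑' n : ℕ, c (1, n + 1) * w ^ (n + 1)).re := by
    intro w hw
    have hre := re_row_nonpos h c hc hM hw
    have hsplit : (∑' n : ℕ, c (1, n) * w ^ n)
        = c (1, 0) * w ^ 0 + ∑' n : ℕ, c (1, n + 1) * w ^ (n + 1) :=
      (row_summable h c hc hw).tsum_eq_zero_add
    rw [hsplit, h10] at hre
    simp only [pow_zero, mul_one, Complex.add_re, Complex.neg_re, Complex.one_re] at hre
    simp only [Complex.sub_re, Complex.one_re]
    linarith
  refine ⟨?_, qdiff h c hc, q0, hpos, ?_, ?_, ?_, ?_, ?_⟩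
  · intro w hw
    rw [sub_sub_cancel]
    exact (row_summable' h c hc hw).hasSum
  -- memM2, part 1: differentiability
  · have hQ : DifferentiableOn ℂ
        (fun z : ℂ × ℂ => 1 - ∑' n : ℕ, c (1, n + 1) * z.2 ^ (n + 1)) polydisc2 := by
      refine (qdiff h c hc).comp (differentiable_snd.differentiableOn) fun z hz => ?_
      rw [Metric.mem_ball, dist_zero_right]
      exact hz.2
    exact ((differentiable_fst.neg.differentiableOn).mul hQ).prodMk
      (differentiable_snd.comp_differentiableOn hM.1)
  -- part 2: value at 0
  · simp only [Prod.fst_zero, neg_zero, zero_mul, hM.2.1, Prod.snd_zero]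
    rfl
  -- part 3: fderiv at 0
  · have h0mem : (0 : ℂ × ℂ) ∈ polydisc2 := by simp [polydisc2]
    have hQat : DifferentiableAt ℂ (fun w : ℂ => 1 - ∑' n : ℕ, c (1, n + 1) * w ^ (n + 1)) 0 :=
      (qdiff h c hc).differentiableAt (Metric.isOpen_ball.mem_nhds (by simp))
    have hu : HasFDerivAt (fun z : ℂ × ℂ => -z.1)
        (-(ContinuousLinearMap.fst ℂ ℂ ℂ)) 0 :=
      (ContinuousLinearMap.fst ℂ ℂ ℂ).hasFDerivAt.neg
    have hv : HasFDerivAt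
        (fun z : ℂ × ℂ => 1 - ∑' n : ℕ, c (1, n + 1) * z.2 ^ (n + 1))
        ((fderiv ℂ (fun w : ℂ => 1 - ∑' n : ℕ, c (1, n + 1) * w ^ (n + 1)) 0).comp
          (ContinuousLinearMap.snd ℂ ℂ ℂ)) 0 :=
      (hQat.hasFDerivAt).comp (f := fun z : ℂ × ℂ => z.2) (0 : ℂ × ℂ) (ContinuousLinearMap.snd ℂ ℂ ℂ).hasFDerivAt
    have hd1 := hu.mul hv
    have hd1' : HasFDerivAt
        (fun z : ℂ × ℂ => -z.1 * (1 - ∑' n : ℕ, c (1, n + 1) * z.2 ^ (n + 1)))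
        (-(ContinuousLinearMap.fst ℂ ℂ ℂ)) 0 := by
      refine hd1.congr_fderiv ?_
      ext z <;> simp [q0]
    have hhat : DifferentiableAt ℂ h 0 :=
      hM.1.differentiableAt (isOpen_polydisc2.mem_nhds h0mem)
    have hd2 : HasFDerivAt (fun z : ℂ × ℂ => (h z).2)
        (-(ContinuousLinearMap.snd ℂ ℂ ℂ)) 0 := by
      have := (ContinuousLinearMap.snd ℂ ℂ ℂ).hasFDerivAt.comp 0 hhat.hasFDerivAt
      rw [hM.2.2.1] at this
      refine this.congr_fderiv ?_
      ext z <;> simp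
    have := (hd1'.prodMk hd2).fderiv
    rw [this]
    ext z <;> simp
  -- part 4: first slope condition
  · intro z hz hz1 _
    have hq : (-z.1 * (1 - ∑' n : ℕ, c (1, n + 1) * z.2 ^ (n + 1))) / z.1
        = -(1 - ∑' n : ℕ, c (1, n + 1) * z.2 ^ (n + 1)) := by
      rw [neg_mul, neg_div, mul_div_cancel_left₀ _ hz1]
    rw [hq, Complex.neg_re]
    linarith [hpos z.2 hz.2]
  -- part 5: second slope condition
  · exact fun z hz h2 hle => hM.2.2.2.2 z hz h2 hle
end

section
/- The map H₂ : D² → C² given by H₂(z₁,z₂) = (-z₁·(-1+z₂)/(-1-z₂), -z₂) belongs to M(D²), and the coefficient of z₁z₂ in its first component equals -2 in modulus equal to 2; in particular the bound |c_{(1,1)}| ≤ 2 for generators in M(D²) is attained. -/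
open Complex

/-- One-variable uniqueness: if a power series sums to `0` on the unit disc, all
coefficients vanish. -/
lemma coeff_eq_zero_of_hasSum_zero (a : ℕ → ℂ)
    (h : ∀ z : ℂ, ‖z‖ < 1 → HasSum (fun n => a n * z ^ n) 0) :
    ∀ n, a n = 0 := by
  set p : FormalMultilinearSeries ℂ ℂ ℂ := FormalMultilinearSeries.ofScalars ℂ a with hp
  have hcoeff : ∀ n, p.coeff n = a n := by
    intro n
    simp [hp, FormalMultilinearSeries.coeff, FormalMultilinearSeries.ofScalars, List.prod_ofFn]
  have h1 : HasFPowerSeriesAt (fun _ : ℂ => (0 : ℂ)) p 0 := by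
    rw [hasFPowerSeriesAt_iff]
    filter_upwards [Metric.ball_mem_nhds (0 : ℂ) one_pos] with z hz
    simp only [hcoeff, smul_eq_mul]
    simpa [mul_comm] using h z (by simpa [Complex.dist_eq] using hz)
  have h2 : HasFPowerSeriesAt (fun _ : ℂ => (0 : ℂ)) (0 : FormalMultilinearSeries ℂ ℂ ℂ) 0 := by
    rw [hasFPowerSeriesAt_iff]
    filter_upwards with z
    simpa [FormalMultilinearSeries.coeff] using hasSum_zero
  have := h1.eq_formalMultilinearSeries h2
  intro n
  have := congrArg (fun q : FormalMultilinearSeries ℂ ℂ ℂ => q.coeff n) this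
  simp only [hcoeff] at this
  rw [this]; simp [FormalMultilinearSeries.coeff]

/-- Two-variable uniqueness at the index `(1,1)`. -/
lemma coeff11_eq_zero (e : ℕ × ℕ → ℂ)
    (h : ∀ z : ℂ × ℂ, ‖z.1‖ < 1 → ‖z.2‖ < 1 →
      HasSum (fun α : ℕ × ℕ => e α * z.1 ^ α.1 * z.2 ^ α.2) 0) :
    e (1, 1) = 0 := by
  have key : ∀ w : ℂ, ‖w‖ < 1 → HasSum (fun m => e (1, m) * w ^ m) 0 := by
    intro w hw
    have hhalf : ‖(1/2 : ℂ)‖ < 1 := by norm_num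
    have S : Summable (fun α : ℕ × ℕ => e α * (1/2 : ℂ) ^ α.1 * w ^ α.2) :=
      (h ((1:ℂ)/2, w) hhalf hw).summable
    have Sb : ∀ n : ℕ, Summable (fun m => e (n, m) * w ^ m) := by
      intro n
      have := (S.prod_factor n).mul_left (((1/2 : ℂ) ^ n)⁻¹)
      refine this.congr fun m => ?_
      have hne : ((1:ℂ)/2) ^ n ≠ 0 := pow_ne_zero _ (by norm_num)
      field_simp
    set b : ℕ → ℂ := fun n => ∑' m, e (n, m) * w ^ m with hb
    have hbs : ∀ n, HasSum (fun m => e (n, m) * w ^ m) (b n) := fun n => (Sb n).hasSum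
    have hzero : ∀ n, b n = 0 := by
      refine coeff_eq_zero_of_hasSum_zero b ?_
      intro z₁ hz₁
      have hfib : ∀ n : ℕ, HasSum (fun m => e (n, m) * z₁ ^ n * w ^ m) (z₁ ^ n * b n) := by
        intro n
        have heq : (fun m => z₁ ^ n * (e (n, m) * w ^ m)) = fun m => e (n, m) * z₁ ^ n * w ^ m := by
          funext m; ring
        simpa [heq] using (hbs n).mul_left (z₁ ^ n)
      have h2 := HasSum.prod_fiberwise (h (z₁, w) hz₁ hw) hfib
      have heq : (fun n => z₁ ^ n * b n) = fun n => b n * z₁ ^ n := by funext n; ring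
      simpa [heq] using h2
    have h1 := hbs 1
    rw [hzero 1] at h1
    exact h1
  exact coeff_eq_zero_of_hasSum_zero (fun m => e (1, m)) key 1

/-- The explicit Taylor coefficients of the first component of `H₂`. -/
noncomputable def dcoef : ℕ × ℕ → ℂ :=
  fun α => if α.1 = 1 then (if α.2 = 0 then -1 else 2 * (-1) ^ (α.2 + 1)) else 0

lemma hasSum_dcoef (z : ℂ × ℂ) (hz : z ∈ polydisc2) :
    HasSum (fun α : ℕ × ℕ => dcoef α * z.1 ^ α.1 * z.2 ^ α.2)
      (-z.1 * (-1 + z.2) / (-1 - z.2)) := by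
  obtain ⟨hz1, hz2⟩ := hz
  have hne : (1 : ℂ) + z.2 ≠ 0 := by
    intro h
    have : z.2 = -1 := by linear_combination h
    rw [this] at hz2; simp at hz2
  have hne' : (-1 : ℂ) - z.2 ≠ 0 := by
    intro h; apply hne; linear_combination -h
  have hg : HasSum (fun m : ℕ => (-z.2) ^ m) (1 - (-z.2))⁻¹ :=
    hasSum_geometric_of_norm_lt_one (by simpa using hz2)
  have hg2 : HasSum (fun m : ℕ => -2 * z.1 * (-z.2) ^ m) (-2 * z.1 * (1 - (-z.2))⁻¹) :=
    hg.mul_left _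
  have hg3 := hg2.update 0 (-z.1)
  have heq : Function.update (fun m : ℕ => -2 * z.1 * (-z.2) ^ m) 0 (-z.1) =
      fun m => dcoef (1, m) * z.1 ^ (1:ℕ) * z.2 ^ m := by
    funext m
    cases m with
    | zero => simp [dcoef]
    | succ k =>
        rw [Function.update_of_ne (Nat.succ_ne_zero k)]
        have hd : dcoef (1, k + 1) = 2 * (-1) ^ (k + 2) := by simp [dcoef]
        rw [hd, neg_pow]
        simp only [Nat.succ_eq_add_one, pow_succ]
        ring
  rw [heq] at hg3
  have hsum : -z.1 - (-2 * z.1 * (-z.2) ^ 0) + -2 * z.1 * (1 - (-z.2))⁻¹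
      = -z.1 * (-1 + z.2) / (-1 - z.2) := by
    rw [sub_neg_eq_add, eq_div_iff hne']
    have ht : (1 + z.2) * (1 + z.2)⁻¹ = 1 := mul_inv_cancel₀ hne
    linear_combination (2 * z.1) * ht
  rw [hsum] at hg3
  have hinj : Function.Injective (fun m : ℕ => ((1, m) : ℕ × ℕ)) := by
    intro a b h; simpa using h
  have hzero : ∀ α : ℕ × ℕ, α ∉ Set.range (fun m : ℕ => ((1, m) : ℕ × ℕ)) →
      dcoef α * z.1 ^ α.1 * z.2 ^ α.2 = 0 := by
    rintro ⟨n, m⟩ hα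
    have : n ≠ 1 := by
      intro h; exact hα ⟨m, by simp [h]⟩
    simp [dcoef, this]
  exact (hinj.hasSum_iff hzero).mp hg3

lemma ne_of_abs_lt' {w : ℂ} (hw : ‖w‖ < 1) : (-1 : ℂ) - w ≠ 0 := by
  intro h
  have : w = -1 := by linear_combination -h
  rw [this] at hw; simp at hw

lemma one_add_ne {w : ℂ} (hw : ‖w‖ < 1) : (1 : ℂ) + w ≠ 0 := by
  intro h
  have : w = -1 := by linear_combination h
  rw [this] at hw; simp at hw

lemma H2_mem : memM2 (fun z : ℂ × ℂ => (-z.1 * (-1 + z.2) / (-1 - z.2), -z.2)) := by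
  refine ⟨?_, ?_, ?_, ?_, ?_⟩
  · -- DifferentiableOn
    intro z hz
    have hne : (-1 : ℂ) - z.2 ≠ 0 := ne_of_abs_lt' hz.2
    have d1 : DifferentiableAt ℂ (fun z : ℂ × ℂ => -z.1 * (-1 + z.2)) z := by fun_prop
    have d2 : DifferentiableAt ℂ (fun z : ℂ × ℂ => -1 - z.2) z := by fun_prop
    have d3 : DifferentiableAt ℂ (fun z : ℂ × ℂ => -z.2) z := by fun_prop
    have d4 : DifferentiableAt ℂ (fun z : ℂ × ℂ => -z.1 * (-1 + z.2) / (-1 - z.2)) z :=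
      by fun_prop (disch := exact hne)
    exact (d4.prodMk d3).differentiableWithinAt
  · simp
  · -- fderiv
    have h2 : HasFDerivAt (fun z : ℂ × ℂ => -z.2)
        (-(ContinuousLinearMap.snd ℂ ℂ ℂ)) 0 := (hasFDerivAt_snd (𝕜 := ℂ)).neg
    have hc : HasFDerivAt (fun z : ℂ × ℂ => -z.1)
        (-(ContinuousLinearMap.fst ℂ ℂ ℂ)) (0 : ℂ × ℂ) := (hasFDerivAt_fst (𝕜 := ℂ)).neg
    have hnum : HasFDerivAt (fun z : ℂ × ℂ => -1 + z.2)
        (ContinuousLinearMap.snd ℂ ℂ ℂ) (0 : ℂ × ℂ) :=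
      (hasFDerivAt_snd (𝕜 := ℂ)).const_add (-1)
    have hden : HasFDerivAt (fun z : ℂ × ℂ => -1 - z.2)
        (-(ContinuousLinearMap.snd ℂ ℂ ℂ)) (0 : ℂ × ℂ) := by
      simpa using (hasFDerivAt_snd (𝕜 := ℂ)).const_sub (-1)
    have hdne : ((fun z : ℂ × ℂ => -1 - z.2) (0 : ℂ × ℂ)) ≠ 0 := by norm_num
    have hinv : HasFDerivAt (fun z : ℂ × ℂ => (-1 - z.2)⁻¹)
        ((-(ContinuousLinearMap.mulLeftRight ℂ ℂ
            (((fun z : ℂ × ℂ => -1 - z.2) 0)⁻¹) (((fun z : ℂ × ℂ => -1 - z.2) 0)⁻¹))).comp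
          (-(ContinuousLinearMap.snd ℂ ℂ ℂ))) (0 : ℂ × ℂ) :=
      (hasFDerivAt_inv' (𝕜 := ℂ) hdne).comp (0 : ℂ × ℂ) hden
    have hmul := hc.mul hnum
    have hdiv := HasFDerivAt.mul (𝕜 := ℂ) hmul hinv
    have hdiv' := hdiv.congr_of_eventuallyEq
      (f₁ := fun z : ℂ × ℂ => -z.1 * (-1 + z.2) / (-1 - z.2))
      (by filter_upwards with z; rw [div_eq_mul_inv]; rfl)
    have hp := HasFDerivAt.prodMk hdiv' h2
    rw [hp.fderiv]
    ext v <;> simp [ContinuousLinearMap.mulLeftRight_apply] <;> norm_num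
  · -- first inequality
    rintro z ⟨hz1, hz2⟩ hz10 _
    have hne : (-1 : ℂ) - z.2 ≠ 0 := ne_of_abs_lt' hz2
    have hne1 : (1 : ℂ) + z.2 ≠ 0 := one_add_ne hz2
    have key : (-z.1 * (-1 + z.2) / (-1 - z.2)) / z.1 = (-1 + z.2) / (1 + z.2) := by
      field_simp
      ring
    rw [key, div_re]
    have hnormsq : Complex.normSq z.2 < 1 := by
      have := Complex.sq_norm z.2
      nlinarith [norm_nonneg z.2]
    have hpos : 0 < Complex.normSq (1 + z.2) := by
      rw [Complex.normSq_pos]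
      exact fun h => hne1 h
    rw [← add_div]
    have hnum2 : ((-1 + z.2).re * (1 + z.2).re + (-1 + z.2).im * (1 + z.2).im) ≤ 0 := by
      simp only [Complex.add_re, Complex.add_im, Complex.neg_re, Complex.neg_im,
        Complex.one_re, Complex.one_im]
      have : Complex.normSq z.2 = z.2.re ^ 2 + z.2.im ^ 2 := by
        rw [Complex.normSq_apply]; ring
      nlinarith
    exact div_nonpos_of_nonpos_of_nonneg hnum2 hpos.le
  · rintro z ⟨hz1, hz2⟩ hz20 _
    rw [neg_div, div_self hz20]
    norm_num

/-- `H₂(z₁,z₂) = (-z₁(-1+z₂)/(-1-z₂), -z₂)` belongs to `M(D²)`, and the coefficient of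
`z₁z₂` in its first component has modulus `2`; the bound `|c_{(1,1)}| ≤ 2` is attained. -/
theorem H2_mem_and_sharp :
    memM2 (fun z : ℂ × ℂ => (-z.1 * (-1 + z.2) / (-1 - z.2), -z.2)) ∧
    ∀ c : ℕ × ℕ → ℂ,
      (∀ z ∈ polydisc2, HasSum (fun α : ℕ × ℕ => c α * z.1 ^ α.1 * z.2 ^ α.2)
        (-z.1 * (-1 + z.2) / (-1 - z.2))) →
      ‖c (1, 1)‖ = 2 := by
  refine ⟨H2_mem, ?_⟩
  intro c hc
  have h0 : ∀ z : ℂ × ℂ, ‖z.1‖ < 1 → ‖z.2‖ < 1 →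
      HasSum (fun α : ℕ × ℕ => (c α - dcoef α) * z.1 ^ α.1 * z.2 ^ α.2) 0 := by
    intro z h1 h2
    have hsub := (hc z ⟨h1, h2⟩).sub (hasSum_dcoef z ⟨h1, h2⟩)
    have heq : (fun α : ℕ × ℕ => c α * z.1 ^ α.1 * z.2 ^ α.2 -
        dcoef α * z.1 ^ α.1 * z.2 ^ α.2) =
        fun α : ℕ × ℕ => (c α - dcoef α) * z.1 ^ α.1 * z.2 ^ α.2 := by
      funext α; ring
    rw [heq, sub_self] at hsub
    exact hsub
  have h11 := coeff11_eq_zero (fun α => c α - dcoef α) h0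
  have hc11 : c (1, 1) = 2 := by
    have hd : dcoef (1, 1) = 2 := by norm_num [dcoef]
    have h := sub_eq_zero.mp h11
    rw [hd] at h
    exact h
  rw [hc11]
  simp
end

section
/- The map H₄ : D² → C² given by H₄(z₁,z₂) = (-z₁ + z₂², -z₂) belongs to M(D²); in particular the coefficient bound |c_{(0,2)}| ≤ 1 for generators in M(D²) is attained. -/
open Complex

private lemma aux_hasFPAt (a : ℕ → ℂ)
    (ha : ∀ t : ℂ, ‖t‖ < 1 → HasSum (fun n => a n * t ^ n) (t ^ 2)) :
    HasFPowerSeriesAt (fun t : ℂ => t ^ 2) (FormalMultilinearSeries.ofScalars ℂ a) 0 := by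
  set p := FormalMultilinearSeries.ofScalars ℂ a with hp
  have hsum : Summable fun n => ‖p n‖ * ((1/2 : NNReal) : ℝ) ^ n := by
    have h1 : Summable fun n => a n * ((1/2 : ℂ)) ^ n :=
      (ha (1/2) (by norm_num)).summable
    have h2 : Summable fun n => ‖a n * ((1/2 : ℂ)) ^ n‖ := by
      rwa [summable_norm_iff]
    refine h2.congr fun n => ?_
    rw [norm_mul, norm_pow, FormalMultilinearSeries.ofScalars_norm]
    norm_num
  have hrad : (0 : ENNReal) < p.radius := by
    refine lt_of_lt_of_le ?_ (p.le_radius_of_summable (r := 1/2) hsum)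
    norm_num
  have hat : HasFPowerSeriesAt p.sum p 0 :=
    (p.hasFPowerSeriesOnBall hrad).hasFPowerSeriesAt
  have heq : (fun t : ℂ => t ^ 2) =ᶠ[nhds 0] p.sum := by
    have : Metric.ball (0 : ℂ) 1 ∈ nhds (0 : ℂ) :=
      Metric.ball_mem_nhds 0 one_pos
    filter_upwards [this] with t ht
    have ht' : ‖t‖ < 1 := by simpa [Complex.dist_eq] using ht
    have : HasSum (fun n => p n fun _ => t) (t ^ 2) := by
      refine (ha t ht').congr_fun fun n => ?_
      rw [FormalMultilinearSeries.ofScalars_apply_eq]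
      simp [smul_eq_mul]
    exact this.tsum_eq.symm
  exact hat.congr heq.symm

private lemma aux_coeff (a : ℕ → ℂ)
    (ha : ∀ t : ℂ, ‖t‖ < 1 → HasSum (fun n => a n * t ^ n) (t ^ 2)) :
    a 2 = 1 := by
  set b : ℕ → ℂ := fun n => if n = 2 then 1 else 0 with hb
  have hbsum : ∀ t : ℂ, ‖t‖ < 1 → HasSum (fun n => b n * t ^ n) (t ^ 2) := by
    intro t _
    have : HasSum (fun n : ℕ => if n = 2 then t ^ 2 else 0) (t ^ 2) := hasSum_ite_eq 2 (t ^ 2)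
    refine this.congr_fun fun n => ?_
    by_cases hn : n = 2 <;> simp [hb, hn]
  have h1 := aux_hasFPAt a ha
  have h2 := aux_hasFPAt b hbsum
  have h3 : FormalMultilinearSeries.ofScalars ℂ a = FormalMultilinearSeries.ofScalars ℂ b :=
    h1.eq_formalMultilinearSeries h2
  have h4 : a = b := (FormalMultilinearSeries.ofScalars_series_eq_iff ℂ a b).mp h3
  simp [hb, funext_iff.mp h4 2]

/-- `H₄(z₁,z₂) = (-z₁ + z₂², -z₂)` belongs to `M(D²)`; in particular the coefficient bound
`|c_{(0,2)}| ≤ 1` for generators in `M(D²)` is attained. -/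
theorem H4_mem :
    memM2 (fun z : ℂ × ℂ => (-z.1 + z.2 ^ 2, -z.2)) ∧
    ∀ c : ℕ × ℕ → ℂ,
      (∀ z ∈ polydisc2, HasSum (fun α : ℕ × ℕ => c α * z.1 ^ α.1 * z.2 ^ α.2)
        (-z.1 + z.2 ^ 2)) →
      ‖c (0, 2)‖ = 1 := by
  constructor
  · refine ⟨?_, ?_, ?_, ?_, ?_⟩
    · exact (by fun_prop : Differentiable ℂ fun z : ℂ × ℂ => (-z.1 + z.2 ^ 2, -z.2)).differentiableOn
    · simp
    · have h1 : HasFDerivAt (fun z : ℂ × ℂ => -z.1 + z.2 ^ 2)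
          (-ContinuousLinearMap.fst ℂ ℂ ℂ) 0 := by
        have hpow : HasFDerivAt (fun z : ℂ × ℂ => z.2 ^ 2)
            (0 : ℂ × ℂ →L[ℂ] ℂ) 0 := by
          have := (hasFDerivAt_snd (𝕜 := ℂ) (p := (0 : ℂ × ℂ))).mul
            (hasFDerivAt_snd (𝕜 := ℂ) (p := (0 : ℂ × ℂ)))
          have h' := this.congr_fderiv (g' := (0 : ℂ × ℂ →L[ℂ] ℂ)) (by ext <;> simp)
          exact h'.congr_of_eventuallyEq (Filter.Eventually.of_forall fun z => by simp [sq])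
        have := (hasFDerivAt_fst (𝕜 := ℂ) (p := (0 : ℂ × ℂ))).neg.add hpow
        exact this.congr_fderiv (by simp)

      have h2 : HasFDerivAt (fun z : ℂ × ℂ => -z.2)
          (-ContinuousLinearMap.snd ℂ ℂ ℂ) 0 :=
        (hasFDerivAt_snd (𝕜 := ℂ) (p := (0 : ℂ × ℂ))).neg
      have h3 := h1.prodMk h2
      rw [h3.fderiv]
      ext <;> simp
    · rintro z ⟨hz1, _⟩ hz0 hle
      have : (-z.1 + z.2 ^ 2) / z.1 = -1 + z.2 ^ 2 / z.1 := by
        field_simp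
      rw [this]
      have habs : ‖z.2 ^ 2 / z.1‖ ≤ ‖z.1‖ := by
        rw [norm_div, norm_pow]
        rw [div_le_iff₀ (norm_pos_iff.mpr hz0)]
        calc ‖z.2‖ ^ 2 ≤ ‖z.1‖ ^ 2 := by
              apply pow_le_pow_left₀ (norm_nonneg _) hle 2
          _ = ‖z.1‖ * ‖z.1‖ := sq ‖z.1‖ ▸ by ring
      have hre : (z.2 ^ 2 / z.1).re ≤ ‖z.1‖ :=
        le_trans (Complex.re_le_norm _) habs
      simp only [Complex.add_re, Complex.neg_re, Complex.one_re]
      linarith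
    · rintro z ⟨_, _⟩ hz0 _
      rw [neg_div, div_self hz0]
      norm_num
  · intro c hc
    have key : ∀ t : ℂ, ‖t‖ < 1 →
        HasSum (fun n => c (0, n) * t ^ n) (t ^ 2) := by
      intro t ht
      have hmem : ((0 : ℂ), t) ∈ polydisc2 := by
        constructor <;> simp [polydisc2, ht]
      have h := hc (0, t) hmem
      simp only [neg_zero, zero_add] at h
      have hinj : Function.Injective (fun n : ℕ => ((0, n) : ℕ × ℕ)) := by
        intro m n hmn
        simpa using hmn
      have hsupp : ∀ α : ℕ × ℕ, α ∉ Set.range (fun n : ℕ => ((0, n) : ℕ × ℕ)) →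
          c α * (0 : ℂ) ^ α.1 * t ^ α.2 = 0 := by
        rintro ⟨i, j⟩ hα
        have hi : i ≠ 0 := by
          intro h0
          exact hα ⟨j, by simp [h0]⟩
        simp [zero_pow hi]
      have := (hinj.hasSum_iff hsupp).mpr h
      refine this.congr_fun fun n => ?_
      simp
    have h2 : c (0, 2) = 1 := by simpa using aux_coeff (fun n => c (0, n)) key
    rw [h2]
    simp
end

section
/- The map H₆ : D³ → C³ given by H₆(z₁,z₂,z₃) = (-z₁ + z₂z₃, -z₂, -z₃) belongs to M(D³); in particular the coefficient bound |c_{(0,1,1)}| ≤ 1 for generators in M(D³) is attained. -/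
open Complex

/-- Uniqueness: if a power series sums to zero on the unit disc, all coefficients vanish. -/
lemma pow_series_zero (a : ℕ → ℂ)
    (h : ∀ t : ℂ, ‖t‖ < 1 → HasSum (fun n => a n * t ^ n) 0) :
    ∀ n, a n = 0 := by
  set p : FormalMultilinearSeries ℂ ℂ ℂ := FormalMultilinearSeries.ofScalars ℂ a with hp
  have hhalf : ‖(1/2 : ℂ)‖ < 1 := by
    rw [show (1/2 : ℂ) = ((1/2 : ℝ) : ℂ) by norm_num, Complex.norm_real, Real.norm_eq_abs]
    rw [abs_of_pos (by norm_num)]; norm_num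
  have htend : Filter.Tendsto (fun n => ‖a n * (1/2 : ℂ) ^ n‖) Filter.atTop (nhds 0) := by
    simpa using ((h (1/2) hhalf).summable.tendsto_atTop_zero).norm
  obtain ⟨C, hC⟩ := htend.bddAbove_range
  have hrad : ((1/2 : NNReal) : ENNReal) ≤ p.radius := by
    apply p.le_radius_of_bound C
    intro n
    have h1 : ‖p n‖ = ‖a n‖ := FormalMultilinearSeries.ofScalars_norm ℂ a n
    have h2 : ‖a n‖ * ((1/2 : NNReal) : ℝ) ^ n = ‖a n * (1/2 : ℂ) ^ n‖ := by
      rw [norm_mul, norm_pow]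
      norm_num
    rw [h1, h2]
    exact hC ⟨n, rfl⟩
  have hball : HasFPowerSeriesOnBall (0 : ℂ → ℂ) p 0 ((1/2 : NNReal) : ENNReal) := by
    refine ⟨hrad, by norm_num, fun {y} hy => ?_⟩
    have hy' : ‖y‖ < 1 := by
      rw [EMetric.mem_ball, edist_zero_right] at hy
      have h3 : (‖y‖₊ : ℝ) < ((1/2 : NNReal) : ℝ) := by exact_mod_cast hy
      calc ‖y‖ = ‖y‖ := rfl
        _ < (1/2 : ℝ) := by simpa using h3
        _ < 1 := by norm_num
    have h4 := h y hy'
    simp only [Pi.zero_apply]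
    have h5 : (fun n => p n fun _ => y) = fun n => a n * y ^ n := by
      funext n
      rw [hp, FormalMultilinearSeries.ofScalars_apply_eq, smul_eq_mul]
    rw [h5]
    exact h4
  have hzero : p = 0 := (hball.hasFPowerSeriesAt).eq_zero
  intro n
  have := congrFun hzero n
  rw [hp] at this
  exact (FormalMultilinearSeries.ofScalars_eq_zero ℂ n).mp this

/-- Extracting the linear coefficient of a power series summing to `w * t`. -/
lemma pow_series_linear (a : ℕ → ℂ) (w : ℂ)
    (h : ∀ t : ℂ, ‖t‖ < 1 → HasSum (fun n => a n * t ^ n) (w * t)) :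
    a 1 = w := by
  have hb := pow_series_zero (fun n => a n - (if n = 1 then w else 0)) ?_
  · have := hb 1
    simp only [if_pos rfl, sub_eq_zero] at this
    simpa using this
  · intro t ht
    have h1 := h t ht
    have h2 : HasSum (fun n => (if n = 1 then w else 0) * t ^ n) (w * t) := by
      have h3 : HasSum (fun n : ℕ => if n = 1 then w * t else 0) (w * t) :=
        hasSum_ite_eq 1 (w * t)
      have h4 : (fun n : ℕ => (if n = 1 then w else 0) * t ^ n)
          = fun n : ℕ => if n = 1 then w * t else 0 := by
        funext n
        split_ifs with hn
        · subst hn; rw [pow_one]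
        · rw [zero_mul]
      rw [h4]
      exact h3
    have h5 := h1.sub h2
    simp only [sub_self] at h5
    have h6 : (fun n => (a n - (if n = 1 then w else 0)) * t ^ n)
        = fun n => a n * t ^ n - (if n = 1 then w else 0) * t ^ n := by
      funext n; ring
    rw [h6]
    exact h5

set_option maxHeartbeats 1000000 in
/-- `H₆(z₁,z₂,z₃) = (-z₁ + z₂z₃, -z₂, -z₃)` belongs to `M(D³)`; in particular the bound
`|c_{(0,1,1)}| ≤ 1` for generators in `M(D³)` is attained. -/
theorem H6_mem :
    memM3 (fun z : ℂ × ℂ × ℂ => (-z.1 + z.2.1 * z.2.2, -z.2.1, -z.2.2)) ∧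
    ∀ c : ℕ × ℕ × ℕ → ℂ,
      (∀ z ∈ polydisc3,
        HasSum (fun α : ℕ × ℕ × ℕ => c α * z.1 ^ α.1 * z.2.1 ^ α.2.1 * z.2.2 ^ α.2.2)
          (-z.1 + z.2.1 * z.2.2)) →
      ‖c (0, 1, 1)‖ = 1 := by
  constructor
  · refine ⟨?_, by simp, ?_, ?_, ?_, ?_⟩
    · apply Differentiable.differentiableOn
      fun_prop
    · have hmul : HasFDerivAt (fun z : ℂ × ℂ × ℂ => z.2.1 * z.2.2)
          (0 : (ℂ × ℂ × ℂ) →L[ℂ] ℂ) 0 := by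
        have h1 : HasFDerivAt (fun z : ℂ × ℂ × ℂ => z.2.1)
            ((ContinuousLinearMap.fst ℂ ℂ ℂ).comp (ContinuousLinearMap.snd ℂ ℂ (ℂ × ℂ))) 0 :=
          (hasFDerivAt_snd (𝕜 := ℂ) (p := (0 : ℂ × ℂ × ℂ))).fst
        have h2 : HasFDerivAt (fun z : ℂ × ℂ × ℂ => z.2.2)
            ((ContinuousLinearMap.snd ℂ ℂ ℂ).comp (ContinuousLinearMap.snd ℂ ℂ (ℂ × ℂ))) 0 :=
          (hasFDerivAt_snd (𝕜 := ℂ) (p := (0 : ℂ × ℂ × ℂ))).snd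
        have := h1.mul h2
        exact this.congr_fderiv (by ext <;> simp)
      have c1 : HasFDerivAt (fun z : ℂ × ℂ × ℂ => -z.1 + z.2.1 * z.2.2)
          (-(ContinuousLinearMap.fst ℂ ℂ (ℂ × ℂ))) 0 := by
        have := (hasFDerivAt_fst (𝕜 := ℂ) (p := (0 : ℂ × ℂ × ℂ))).neg.add hmul
        exact this.congr_fderiv (by simp)
      have c2 : HasFDerivAt (fun z : ℂ × ℂ × ℂ => -z.2.1)
          (-(ContinuousLinearMap.fst ℂ ℂ ℂ).comp (ContinuousLinearMap.snd ℂ ℂ (ℂ × ℂ))) 0 :=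
        (hasFDerivAt_snd (𝕜 := ℂ) (p := (0 : ℂ × ℂ × ℂ))).fst.neg
      have c3 : HasFDerivAt (fun z : ℂ × ℂ × ℂ => -z.2.2)
          (-(ContinuousLinearMap.snd ℂ ℂ ℂ).comp (ContinuousLinearMap.snd ℂ ℂ (ℂ × ℂ))) 0 :=
        (hasFDerivAt_snd (𝕜 := ℂ) (p := (0 : ℂ × ℂ × ℂ))).snd.neg
      have H := c1.prodMk (c2.prodMk c3)
      rw [H.fderiv]
      ext <;> simp
    · rintro z ⟨h1, -, -⟩ hz h2 h3
      have key : (-z.1 + z.2.1 * z.2.2) / z.1 = -1 + z.2.1 * z.2.2 / z.1 := by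
        field_simp
      rw [key]
      have hre : ((-1 : ℂ) + z.2.1 * z.2.2 / z.1).re = -1 + (z.2.1 * z.2.2 / z.1).re := by simp
      rw [hre]
      have hle : (z.2.1 * z.2.2 / z.1).re ≤ ‖z.2.1 * z.2.2 / z.1‖ := re_le_norm _
      have habs : ‖z.2.1 * z.2.2 / z.1‖ ≤ 1 := by
        rw [norm_div, norm_mul]
        rw [div_le_one (norm_pos_iff.mpr hz)]
        nlinarith [norm_nonneg z.1, norm_nonneg z.2.1,
          norm_nonneg z.2.2, h1.le]
      linarith
    · rintro z - hz - -
      rw [neg_div, div_self hz]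
      norm_num
    · rintro z - hz - -
      rw [neg_div, div_self hz]
      norm_num
  · 
    intro c hc
    have hhalf : ‖(1/2 : ℂ)‖ < 1 := by
      rw [show (1/2 : ℂ) = ((1/2 : ℝ) : ℂ) by norm_num, Complex.norm_real, Real.norm_eq_abs]
      rw [abs_of_pos (by norm_num)]; norm_num
    have key : ∀ a b : ℂ, ‖a‖ < 1 → ‖b‖ < 1 →
        HasSum (fun p : ℕ × ℕ => c (0, p.1, p.2) * a ^ p.1 * b ^ p.2) (a * b) := by
      intro a b ha hb
      have hmem : ((0 : ℂ), a, b) ∈ polydisc3 := ⟨by simp, ha, hb⟩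
      have h0 := hc (0, a, b) hmem
      simp only [neg_zero, zero_add] at h0
      have hi : Function.Injective (fun p : ℕ × ℕ => ((0 : ℕ), p.1, p.2)) := by
        intro p q h
        simpa [Prod.ext_iff] using h
      have hvanish : ∀ α ∉ Set.range (fun p : ℕ × ℕ => ((0 : ℕ), p.1, p.2)),
          c α * (0 : ℂ) ^ α.1 * a ^ α.2.1 * b ^ α.2.2 = 0 := by
        intro α hα
        have hα1 : α.1 ≠ 0 := by
          intro h01
          exact hα ⟨(α.2.1, α.2.2), by simp [Prod.ext_iff, h01.symm]⟩
        rw [zero_pow hα1]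
        ring
      have h7 := (hi.hasSum_iff hvanish).mpr h0
      have heq : ((fun α : ℕ × ℕ × ℕ => c α * (0:ℂ) ^ α.1 * a ^ α.2.1 * b ^ α.2.2) ∘
          (fun p : ℕ × ℕ => ((0 : ℕ), p.1, p.2)))
          = fun p : ℕ × ℕ => c (0, p.1, p.2) * a ^ p.1 * b ^ p.2 := by
        funext p
        simp
      rw [heq] at h7
      exact h7
    have hfinal : ∀ b : ℂ, ‖b‖ < 1 →
        HasSum (fun n => c (0, 1, n) * b ^ n) (1 * b) := by
      intro b hb
      have hs : ∀ m : ℕ, Summable (fun n => c (0, m, n) * b ^ n) := by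
        intro m
        have h1 := (key (1/2) b hhalf hb).summable
        have hinj : Function.Injective (fun n : ℕ => (m, n)) :=
          fun n₁ n₂ h => (Prod.ext_iff.mp h).2
        have h2 := h1.comp_injective hinj
        simp only [Function.comp_def] at h2
        have h3 := h2.mul_left ((2 : ℂ) ^ m)
        refine h3.congr fun n => ?_
        have h4 : (2 : ℂ) ^ m * ((1/2 : ℂ)) ^ m = 1 := by
          rw [← mul_pow]; norm_num
        calc (2:ℂ)^m * (c (0, m, n) * (1/2:ℂ)^m * b^n)
            = ((2:ℂ)^m * (1/2:ℂ)^m) * (c (0, m, n) * b^n) := by ring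
          _ = c (0, m, n) * b ^ n := by rw [h4, one_mul]
      set A : ℕ → ℂ := fun m => ∑' n, c (0, m, n) * b ^ n with hA
      have hstep : ∀ a : ℂ, ‖a‖ < 1 → HasSum (fun m => A m * a ^ m) (b * a) := by
        intro a ha
        have hfib : ∀ m : ℕ, HasSum (fun n => c (0, m, n) * a ^ m * b ^ n) (a ^ m * A m) := by
          intro m
          have h5 := ((hs m).hasSum).mul_left (a ^ m)
          have heq : (fun n => c (0, m, n) * a ^ m * b ^ n)
              = fun n => a ^ m * (c (0, m, n) * b ^ n) := by
            funext n; ring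
          rw [heq]
          exact h5
        have h6 := HasSum.prod_fiberwise (key a b ha hb) hfib
        have heq2 : (fun m => A m * a ^ m) = fun m => a ^ m * A m := by
          funext m; ring
        rw [heq2, mul_comm b a]
        exact h6
      have hA1 : A 1 = b := pow_series_linear A b hstep
      have h8 : HasSum (fun n => c (0, 1, n) * b ^ n) (A 1) := (hs 1).hasSum
      rw [hA1] at h8
      rw [one_mul]
      exact h8
    have := pow_series_linear (fun n => c (0, 1, n)) 1 hfinal
    rw [this]
    simp
end

section
/- Let F₆ : D³ → C³ be F₆(z₁,z₂,z₃) = (z₁ + z₂z₃, z₂, z₃). Then F₆ is injective on D³, F₆(0)=0, DF₆(0)=I₃, and -(DF₆(z))⁻¹·F₆(z) = (-z₁ + z₂z₃, -z₂, -z₃) belongs to M(D³); hence F₆ is starlike on D³. -/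
open Complex

noncomputable def c1 : (ℂ × ℂ × ℂ) →L[ℂ] ℂ := ContinuousLinearMap.fst ℂ ℂ (ℂ × ℂ)
noncomputable def c2 : (ℂ × ℂ × ℂ) →L[ℂ] ℂ :=
  (ContinuousLinearMap.fst ℂ ℂ ℂ).comp (ContinuousLinearMap.snd ℂ ℂ (ℂ × ℂ))
noncomputable def c3 : (ℂ × ℂ × ℂ) →L[ℂ] ℂ :=
  (ContinuousLinearMap.snd ℂ ℂ ℂ).comp (ContinuousLinearMap.snd ℂ ℂ (ℂ × ℂ))

noncomputable def LF (z : ℂ × ℂ × ℂ) : (ℂ × ℂ × ℂ) →L[ℂ] (ℂ × ℂ × ℂ) :=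
  (c1 + (z.2.1 • c3 + z.2.2 • c2)).prod (ContinuousLinearMap.snd ℂ ℂ (ℂ × ℂ))

noncomputable def LFinv (z : ℂ × ℂ × ℂ) : (ℂ × ℂ × ℂ) →L[ℂ] (ℂ × ℂ × ℂ) :=
  (c1 - (z.2.1 • c3 + z.2.2 • c2)).prod (ContinuousLinearMap.snd ℂ ℂ (ℂ × ℂ))

noncomputable def LH (z : ℂ × ℂ × ℂ) : (ℂ × ℂ × ℂ) →L[ℂ] (ℂ × ℂ × ℂ) :=
  (-c1 + (z.2.1 • c3 + z.2.2 • c2)).prod (-(ContinuousLinearMap.snd ℂ ℂ (ℂ × ℂ)))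

theorem LF_apply (z w : ℂ × ℂ × ℂ) :
    LF z w = (w.1 + (z.2.1 * w.2.2 + z.2.2 * w.2.1), w.2.1, w.2.2) := by
  simp [LF, c1, c2, c3, ContinuousLinearMap.prod_apply]

theorem LFinv_apply (z w : ℂ × ℂ × ℂ) :
    LFinv z w = (w.1 - (z.2.1 * w.2.2 + z.2.2 * w.2.1), w.2.1, w.2.2) := by
  simp [LFinv, c1, c2, c3, ContinuousLinearMap.prod_apply]

theorem LH_apply (z w : ℂ × ℂ × ℂ) :
    LH z w = (-w.1 + (z.2.1 * w.2.2 + z.2.2 * w.2.1), -w.2.1, -w.2.2) := by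
  ext <;> simp [LH, c1, c2, c3, ContinuousLinearMap.prod_apply]

theorem hF (z : ℂ × ℂ × ℂ) :
    HasFDerivAt (fun z : ℂ × ℂ × ℂ => (z.1 + z.2.1 * z.2.2, z.2.1, z.2.2)) (LF z) z := by
  have h1 : HasFDerivAt (fun z : ℂ × ℂ × ℂ => z.1) c1 z := hasFDerivAt_fst
  have h2 : HasFDerivAt (fun z : ℂ × ℂ × ℂ => z.2.1) c2 z :=
    (hasFDerivAt_fst (p := z.2)).comp z hasFDerivAt_snd
  have h3 : HasFDerivAt (fun z : ℂ × ℂ × ℂ => z.2.2) c3 z :=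
    (hasFDerivAt_snd (p := z.2)).comp z hasFDerivAt_snd
  have hs : HasFDerivAt (fun z : ℂ × ℂ × ℂ => z.2) (ContinuousLinearMap.snd ℂ ℂ (ℂ × ℂ)) z :=
    hasFDerivAt_snd
  exact HasFDerivAt.prodMk (h1.add (h2.mul h3)) hs

theorem hH (z : ℂ × ℂ × ℂ) :
    HasFDerivAt (fun z : ℂ × ℂ × ℂ => (-z.1 + z.2.1 * z.2.2, -z.2.1, -z.2.2)) (LH z) z := by
  have h1 : HasFDerivAt (fun z : ℂ × ℂ × ℂ => z.1) c1 z := hasFDerivAt_fst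
  have h2 : HasFDerivAt (fun z : ℂ × ℂ × ℂ => z.2.1) c2 z :=
    (hasFDerivAt_fst (p := z.2)).comp z hasFDerivAt_snd
  have h3 : HasFDerivAt (fun z : ℂ × ℂ × ℂ => z.2.2) c3 z :=
    (hasFDerivAt_snd (p := z.2)).comp z hasFDerivAt_snd
  have hs : HasFDerivAt (fun z : ℂ × ℂ × ℂ => z.2) (ContinuousLinearMap.snd ℂ ℂ (ℂ × ℂ)) z :=
    hasFDerivAt_snd
  exact HasFDerivAt.prodMk (h1.neg.add (h2.mul h3)) hs.neg

/-- `F₆(z₁,z₂,z₃) = (z₁ + z₂z₃, z₂, z₃)` is normalized, univalent on `D³`, and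
`-(DF₆(z))⁻¹·F₆(z) = (-z₁ + z₂z₃, -z₂, -z₃) ∈ M(D³)`; hence `F₆` is starlike on `D³`. -/
theorem F6_starlike :
    Set.InjOn (fun z : ℂ × ℂ × ℂ => (z.1 + z.2.1 * z.2.2, z.2.1, z.2.2)) polydisc3 ∧
    (fun z : ℂ × ℂ × ℂ => (z.1 + z.2.1 * z.2.2, z.2.1, z.2.2)) 0 = 0 ∧
    fderiv ℂ (fun z : ℂ × ℂ × ℂ => (z.1 + z.2.1 * z.2.2, z.2.1, z.2.2)) 0
      = ContinuousLinearMap.id ℂ (ℂ × ℂ × ℂ) ∧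
    (∀ z ∈ polydisc3,
      IsUnit (fderiv ℂ (fun z : ℂ × ℂ × ℂ => (z.1 + z.2.1 * z.2.2, z.2.1, z.2.2)) z)) ∧
    (∀ z ∈ polydisc3,
      fderiv ℂ (fun z : ℂ × ℂ × ℂ => (z.1 + z.2.1 * z.2.2, z.2.1, z.2.2)) z
        ((-z.1 + z.2.1 * z.2.2, -z.2.1, -z.2.2))
        = -(z.1 + z.2.1 * z.2.2, z.2.1, z.2.2)) ∧
    memM3 (fun z : ℂ × ℂ × ℂ => (-z.1 + z.2.1 * z.2.2, -z.2.1, -z.2.2)) := by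
  have hfd : ∀ z, fderiv ℂ (fun z : ℂ × ℂ × ℂ => (z.1 + z.2.1 * z.2.2, z.2.1, z.2.2)) z
      = LF z := fun z => (hF z).fderiv
  refine ⟨?_, ?_, ?_, ?_, ?_, ?_, ?_, ?_, ?_, ?_, ?_⟩
  · -- injectivity
    intro z hz w hw h
    simp only [Prod.mk.injEq] at h
    obtain ⟨h1, h2, h3⟩ := h
    rw [h2, h3] at h1
    have hz1 : z.1 = w.1 := by linear_combination h1
    exact Prod.ext_iff.mpr ⟨hz1, Prod.ext_iff.mpr ⟨h2, h3⟩⟩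
  · -- value at 0
    simp
  · -- fderiv at 0 = id
    rw [hfd 0]
    ext w <;> simp [LF_apply]
  · -- IsUnit
    intro z _
    rw [hfd z]
    have hmul1 : LF z * LFinv z = 1 := by
      ext w <;>
        simp [ContinuousLinearMap.mul_apply, LF_apply, LFinv_apply] <;> ring
    have hmul2 : LFinv z * LF z = 1 := by
      ext w <;>
        simp [ContinuousLinearMap.mul_apply, LF_apply, LFinv_apply] <;> ring
    exact ⟨⟨LF z, LFinv z, hmul1, hmul2⟩, rfl⟩
  · -- applying DF to h z
    intro z _
    rw [hfd z, LF_apply]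
    ext <;> simp <;> ring
  · -- differentiability of h
    exact fun z _ => ((hH z).differentiableAt).differentiableWithinAt
  · -- h 0 = 0
    simp
  · -- fderiv of h at 0
    rw [(hH 0).fderiv]
    ext w <;> simp [LH_apply]
  · -- first component inequality
    intro z hz h1 h21 h31
    have hz1 : (0 : ℝ) < ‖z.1‖ := norm_pos_iff.mpr h1
    have key : (z.2.1 * z.2.2 / z.1).re ≤ ‖z.1‖ := by
      calc (z.2.1 * z.2.2 / z.1).re ≤ ‖z.2.1 * z.2.2 / z.1‖ :=
            Complex.re_le_norm _
        _ = ‖z.2.1‖ * ‖z.2.2‖ / ‖z.1‖ := by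
            rw [norm_div, norm_mul]
        _ ≤ ‖z.1‖ := by
            rw [div_le_iff₀ hz1]
            nlinarith [norm_nonneg z.2.1,
              norm_nonneg z.2.2]
    have hrw : (-z.1 + z.2.1 * z.2.2) / z.1 = -1 + z.2.1 * z.2.2 / z.1 := by
      field_simp
    rw [hrw]
    have hlt : ‖z.1‖ < 1 := hz.1
    simp only [Complex.add_re, Complex.neg_re, Complex.one_re]
    linarith
  · -- second component inequality
    intro z _ h2 _ _
    rw [neg_div, div_self h2]
    norm_num
  · -- third component inequality
    intro z _ h3 _ _
    rw [neg_div, div_self h3]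
    norm_num
end
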